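/- arXiv:2211.14980 — 10 statements merged into one kernel-verified Lean document; each statement's English description precedes it below -/
import Mathlib

section
/- Let λ ≥ 0, let P be a feature-consistent partition of Fin N, let F be a subset of the set of blocks of P, and let H be a natural number with H + 1 ≤ |P|. Let S = Fin N minus the union of the blocks in F, and for each feature vector v in the image of x restricted to S let u_v = {i ∈ S : x i = v} be the corresponding set of equivalent points. Then R(P) ≥ (1/N)·∑_{B∈F} SSE(B) + λ·H + λ + (1/N)·∑_v SSE(u_v). (Equivalent Points Lower Bound: every child tree's objective is at least the fixed-leaf loss plus the leaf penalty plus the total equivalence loss of the equivalent-point sets captured by the splitting leaves, since points with identical features can never be separated into different leaves.) -/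
open Finset

/-- Sum of squared errors of targets `y` on a block `B`, with prediction the mean of `y` on `B`. -/
noncomputable def sse {N : ℕ} (y : Fin N → ℝ) (B : Finset (Fin N)) : ℝ :=
  ∑ i ∈ B, (y i - (∑ j ∈ B, y j) / (B.card : ℝ)) ^ 2

/-- `P` is a partition of the set `S`: pairwise disjoint nonempty blocks whose union is `S`. -/
def IsPartitionOn {N : ℕ} (S : Finset (Fin N)) (P : Finset (Finset (Fin N))) : Prop :=
  (∀ B ∈ P, B.Nonempty) ∧
  (∀ B ∈ P, ∀ B' ∈ P, B ≠ B' → Disjoint B B') ∧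
  P.biUnion id = S

/-- Regularized objective of a partition (tree): MSE plus `lam` per leaf. -/
noncomputable def Robj {N : ℕ} (y : Fin N → ℝ) (lam : ℝ) (P : Finset (Finset (Fin N))) : ℝ :=
  (1 / (N : ℝ)) * ∑ B ∈ P, sse y B + lam * (P.card : ℝ)

/-- A partition is feature-consistent if equivalent points (identical feature vectors)
always lie in the same block. -/
def FeatureConsistent {N M : ℕ} (x : Fin N → Fin M → Bool)
    (P : Finset (Finset (Fin N))) : Prop :=
  ∀ i j : Fin N, x i = x j → ∀ B ∈ P, i ∈ B → j ∈ B

lemma sse_nonneg {N : ℕ} (y : Fin N → ℝ) (A : Finset (Fin N)) : 0 ≤ sse y A :=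
  Finset.sum_nonneg fun _ _ => sq_nonneg _

lemma sse_le_sum_sq {N : ℕ} (y : Fin N → ℝ) (A : Finset (Fin N)) (c : ℝ) :
    sse y A ≤ ∑ i ∈ A, (y i - c) ^ 2 := by
  rcases A.eq_empty_or_nonempty with h | h
  · simp [sse, h]
  · have hn0 : (A.card : ℝ) ≠ 0 :=
      Nat.cast_ne_zero.mpr (Finset.card_pos.mpr h).ne'
    set m : ℝ := (∑ j ∈ A, y j) / (A.card : ℝ) with hm
    have hsum : ∑ i ∈ A, (y i - m) = 0 := by
      rw [Finset.sum_sub_distrib, Finset.sum_const, nsmul_eq_mul, hm]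
      field_simp
      ring
    have hsse : sse y A = ∑ i ∈ A, (y i - m) ^ 2 := by rw [sse, hm]
    have expand : ∑ i ∈ A, (y i - c) ^ 2
        = ∑ i ∈ A, (y i - m) ^ 2 + 2 * (m - c) * ∑ i ∈ A, (y i - m)
          + (A.card : ℝ) * (m - c) ^ 2 := by
      rw [Finset.mul_sum, ← Finset.sum_add_distrib]
      have hc2 : (A.card : ℝ) * (m - c) ^ 2 = ∑ _i ∈ A, (m - c) ^ 2 := by
        rw [Finset.sum_const, nsmul_eq_mul]
      rw [hc2, ← Finset.sum_add_distrib]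
      exact Finset.sum_congr rfl fun i _ => by ring
    have hpos : 0 ≤ (A.card : ℝ) * (m - c) ^ 2 := by positivity
    rw [hsum, mul_zero, add_zero] at expand
    rw [hsse]
    linarith [expand]


/-- **Equivalent Points Lower Bound.** For `λ ≥ 0`, a feature-consistent partition `P`
of `Fin N`, a subset `F` of its blocks and `H` with `H + 1 ≤ |P|`: with
`S = Fin N \ ⋃ F` and the equivalent-point sets `u_v = {i ∈ S : x i = v}`,
`R(P) ≥ (1/N)·∑_{B∈F} SSE(B) + λ·H + λ + (1/N)·∑_v SSE(u_v)`. -/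
theorem equivalent_points_lower_bound
    {N M : ℕ} (hN : 1 ≤ N) (x : Fin N → Fin M → Bool) (y : Fin N → ℝ)
    (lam : ℝ) (hlam : 0 ≤ lam)
    (P : Finset (Finset (Fin N))) (hP : IsPartitionOn Finset.univ P)
    (hPx : FeatureConsistent x P)
    (F : Finset (Finset (Fin N))) (hF : F ⊆ P)
    (H : ℕ) (hH : H + 1 ≤ P.card) :
    (1 / (N : ℝ)) * ∑ B ∈ F, sse y B + lam * (H : ℝ) + lam
      + (1 / (N : ℝ)) * ∑ v ∈ (Finset.univ \ F.biUnion id).image x,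
          sse y ((Finset.univ \ F.biUnion id).filter (fun i => x i = v))
      ≤ Robj y lam P := by
  obtain ⟨hne, hdisj, hcov⟩ := hP
  set S : Finset (Fin N) := Finset.univ \ F.biUnion id with hS
  set V : Finset (Fin M → Bool) := S.image x with hV
  set u : (Fin M → Bool) → Finset (Fin N) := fun v => S.filter (fun i => x i = v) with hu
  -- each equivalence class is contained in a block of P \ F
  have hexists : ∀ v : Fin M → Bool, ∃ B : Finset (Fin N),
      v ∈ V → B ∈ P \ F ∧ u v ⊆ B := by
    intro v
    by_cases hv : v ∈ V
    · obtain ⟨i, hiS, hix⟩ := Finset.mem_image.mp hv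
      have hiU : i ∈ P.biUnion id := by rw [hcov]; exact Finset.mem_univ i
      obtain ⟨B, hBP, hiB⟩ := Finset.mem_biUnion.mp hiU
      have hBF : B ∉ F := by
        intro hBF
        exact (Finset.mem_sdiff.mp hiS).2 (Finset.mem_biUnion.mpr ⟨B, hBF, hiB⟩)
      refine ⟨B, fun _ => ⟨Finset.mem_sdiff.mpr ⟨hBP, hBF⟩, ?_⟩⟩
      intro j hj
      have hxj : x j = v := (Finset.mem_filter.mp hj).2
      exact hPx i j (by rw [hix, hxj]) B hBP hiB
    · exact ⟨∅, fun h => absurd h hv⟩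
  choose f hf using hexists
  have hmaps : ∀ v ∈ V, f v ∈ P \ F := fun v hv => (hf v hv).1
  -- sum over classes ≤ sum over blocks of P \ F
  have hmain : ∑ v ∈ V, sse y (u v) ≤ ∑ B ∈ P \ F, sse y B := by
    rw [← Finset.sum_fiberwise_of_maps_to hmaps (fun v => sse y (u v))]
    apply Finset.sum_le_sum
    intro B hB
    set c : ℝ := (∑ j ∈ B, y j) / (B.card : ℝ) with hc
    calc ∑ v ∈ V.filter (fun v => f v = B), sse y (u v)
        ≤ ∑ v ∈ V.filter (fun v => f v = B), ∑ i ∈ u v, (y i - c) ^ 2 :=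
          Finset.sum_le_sum fun v _ => sse_le_sum_sq y (u v) c
      _ = ∑ i ∈ (V.filter (fun v => f v = B)).biUnion u, (y i - c) ^ 2 := by
          rw [Finset.sum_biUnion]
          intro v hv w hw hvw
          simp only [hu]
          simp only [Function.onFun]
          rw [Finset.disjoint_left]
          intro a ha hb
          exact hvw (((Finset.mem_filter.mp ha).2).symm.trans (Finset.mem_filter.mp hb).2)
      _ ≤ ∑ i ∈ B, (y i - c) ^ 2 := by
          apply Finset.sum_le_sum_of_subset_of_nonneg
          · intro i hi
            obtain ⟨v, hv, hiv⟩ := Finset.mem_biUnion.mp hi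
            have hvV : v ∈ V := (Finset.mem_filter.mp hv).1
            have hfvB : f v = B := (Finset.mem_filter.mp hv).2
            exact hfvB ▸ (hf v hvV).2 hiv
          · intro i _ _; exact sq_nonneg _
      _ = sse y B := by rw [sse, ← hc]
  -- assemble
  have hsplit : ∑ B ∈ P, sse y B = ∑ B ∈ P \ F, sse y B + ∑ B ∈ F, sse y B :=
    (Finset.sum_sdiff hF).symm
  have hNpos : (0:ℝ) < (N:ℝ) := by exact_mod_cast hN
  have h1N : (0:ℝ) ≤ 1 / (N:ℝ) := by positivity
  have hcard : lam * ((H:ℝ) + 1) ≤ lam * (P.card : ℝ) := by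
    apply mul_le_mul_of_nonneg_left _ hlam
    exact_mod_cast hH
  have hsse : (1 / (N:ℝ)) * ∑ v ∈ V, sse y (u v) ≤ (1 / (N:ℝ)) * ∑ B ∈ P \ F, sse y B :=
    mul_le_mul_of_nonneg_left hmain h1N
  rw [Robj, hsplit]
  simp only [hu, hV, hS] at hsse ⊢
  nlinarith [hsse, hcard]
end

section
/- Let λ ≥ 0, let P be a partition of Fin N, and let F be a proper subset of the set of blocks of P with K = |F|. Let S = Fin N minus the union of the blocks in F (S is nonempty since F is proper). Then R(P) ≥ (1/N)·∑_{B∈F} SSE(B) + λ·K + inf over integers C ≥ 1 of ( (1/N)·kMeans(C, S) + λ·C ). (k-Means Lower Bound: the objective of any child tree is at least the fixed-leaf contribution plus the best possible trade-off between the optimal one-dimensional C-means clustering loss of the targets captured by the splitting leaves and the leaf penalty λ·C.) -/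
open Finset

/-- Optimal 1D k-means objective: cluster the targets of the samples in `S` into `C` clusters. -/
noncomputable def kMeansObj {N : ℕ} (y : Fin N → ℝ) (C : ℕ) (S : Finset (Fin N)) : ℝ :=
  ⨅ (A : {i // i ∈ S} → Fin C) (z : Fin C → ℝ), ∑ i ∈ S.attach, (y i.1 - z (A i)) ^ 2

lemma kMeansObj_nonneg {N : ℕ} (y : Fin N → ℝ) (C : ℕ) (S : Finset (Fin N)) :
    0 ≤ kMeansObj y C S :=
  Real.iInf_nonneg fun _ => Real.iInf_nonneg fun _ =>
    Finset.sum_nonneg fun _ _ => sq_nonneg _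

lemma kMeansObj_le {N : ℕ} (y : Fin N → ℝ) (C : ℕ) (S : Finset (Fin N))
    (A : {i // i ∈ S} → Fin C) (z : Fin C → ℝ) :
    kMeansObj y C S ≤ ∑ i ∈ S.attach, (y i.1 - z (A i)) ^ 2 := by
  have h1 : BddBelow (Set.range fun A : {i // i ∈ S} → Fin C =>
      ⨅ z : Fin C → ℝ, ∑ i ∈ S.attach, (y i.1 - z (A i)) ^ 2) := by
    refine ⟨0, ?_⟩
    rintro x ⟨A', rfl⟩
    exact Real.iInf_nonneg fun _ => Finset.sum_nonneg fun _ _ => sq_nonneg _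
  have h2 : BddBelow (Set.range fun z : Fin C → ℝ =>
      ∑ i ∈ S.attach, (y i.1 - z (A i)) ^ 2) := by
    refine ⟨0, ?_⟩
    rintro x ⟨z', rfl⟩
    exact Finset.sum_nonneg fun _ _ => sq_nonneg _
  exact le_trans (ciInf_le h1 A) (ciInf_le h2 z)

/-- **k-Means Lower Bound.** For `λ ≥ 0`, a partition `P` of `Fin N` and a proper subset
`F` of its blocks with `K = |F|`, letting `S = Fin N \ ⋃ F`,
`R(P) ≥ (1/N)·∑_{B∈F} SSE(B) + λ·K + inf_{C ≥ 1} ((1/N)·kMeans(C,S) + λ·C)`. -/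
theorem kmeans_lower_bound
    {N : ℕ} (hN : 1 ≤ N) (y : Fin N → ℝ) (lam : ℝ) (hlam : 0 ≤ lam)
    (P : Finset (Finset (Fin N))) (hP : IsPartitionOn Finset.univ P)
    (F : Finset (Finset (Fin N))) (hF : F ⊂ P) :
    (1 / (N : ℝ)) * ∑ B ∈ F, sse y B + lam * (F.card : ℝ)
      + ⨅ C : {C : ℕ // 1 ≤ C},
          ((1 / (N : ℝ)) * kMeansObj y C.1 (Finset.univ \ F.biUnion id) + lam * (C.1 : ℝ))
      ≤ Robj y lam P := by
  classical
  obtain ⟨hne, hdisj, hun⟩ := hP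
  set S : Finset (Fin N) := Finset.univ \ F.biUnion id with hSdef
  set G : Finset (Finset (Fin N)) := P \ F with hGdef
  have hFP : F ⊆ P := hF.subset
  have hGsub : G ⊆ P := Finset.sdiff_subset
  obtain ⟨B0, hB0P, hB0F⟩ := Finset.exists_of_ssubset hF
  have hGne : G.Nonempty := ⟨B0, Finset.mem_sdiff.2 ⟨hB0P, hB0F⟩⟩
  have hGcard : 1 ≤ G.card := Finset.card_pos.2 hGne
  -- union of G equals S
  have hunG : G.biUnion id = S := by
    ext i
    simp only [hSdef, Finset.mem_biUnion, Finset.mem_sdiff, Finset.mem_univ, true_and, id]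
    constructor
    · rintro ⟨B, hBG, hiB⟩
      obtain ⟨hBP, hBF⟩ := Finset.mem_sdiff.1 hBG
      intro hiF
      obtain ⟨B', hB'F, hiB'⟩ := hiF
      have hB'P : B' ∈ P := hFP hB'F
      by_cases hBB : B = B'
      · exact hBF (hBB ▸ hB'F)
      · exact Finset.disjoint_left.1 (hdisj B hBP B' hB'P hBB) hiB hiB'
    · intro hiF
      have : i ∈ P.biUnion id := by rw [hun]; exact Finset.mem_univ i
      obtain ⟨B, hBP, hiB⟩ := Finset.mem_biUnion.1 this
      exact ⟨B, Finset.mem_sdiff.2 ⟨hBP, fun hBF => hiF ⟨B, hBF, hiB⟩⟩, hiB⟩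
  -- block choice function
  have hex : ∀ i ∈ S, ∃ B ∈ G, i ∈ B := by
    intro i hi
    rw [← hunG] at hi
    exact Finset.mem_biUnion.1 hi
  set blk : Fin N → Finset (Fin N) := fun i =>
    if h : ∃ B ∈ G, i ∈ B then h.choose else ∅ with hblkdef
  have hblkG : ∀ i ∈ S, blk i ∈ G ∧ i ∈ blk i := by
    intro i hi
    have h := hex i hi
    simp only [hblkdef, dif_pos h]
    exact ⟨h.choose_spec.1, h.choose_spec.2⟩
  have hblk_eq : ∀ B ∈ G, ∀ i ∈ B, blk i = B := by
    intro B hBG i hiB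
    have hiS : i ∈ S := by rw [← hunG]; exact Finset.mem_biUnion.2 ⟨B, hBG, hiB⟩
    obtain ⟨h1, h2⟩ := hblkG i hiS
    by_contra hne'
    exact Finset.disjoint_left.1 (hdisj _ (hGsub h1) _ (hGsub hBG) hne') h2 hiB
  -- the assignment and centers
  let e' : {B // B ∈ G} ≃ Fin G.card := G.equivFin
  let z : Fin G.card → ℝ := fun c =>
    (∑ j ∈ (e'.symm c).1, y j) / (((e'.symm c).1.card : ℝ))
  let A : {i // i ∈ S} → Fin G.card := fun i => e' ⟨blk i.1, (hblkG i.1 i.2).1⟩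
  -- key sum identity
  have hsum : ∑ i ∈ S.attach, (y i.1 - z (A i)) ^ 2 = ∑ B ∈ G, sse y B := by
    have hz : ∀ i : {i // i ∈ S}, z (A i) =
        (∑ j ∈ blk i.1, y j) / ((blk i.1).card : ℝ) := by
      intro i
      simp only [z, A, Equiv.symm_apply_apply]
    calc ∑ i ∈ S.attach, (y i.1 - z (A i)) ^ 2
        = ∑ i ∈ S.attach, (y i.1 - (∑ j ∈ blk i.1, y j) / ((blk i.1).card : ℝ)) ^ 2 := by
          refine Finset.sum_congr rfl fun i _ => by rw [hz]
      _ = ∑ i ∈ S, (y i - (∑ j ∈ blk i, y j) / ((blk i).card : ℝ)) ^ 2 :=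
          Finset.sum_attach S (fun i => (y i - (∑ j ∈ blk i, y j) / ((blk i).card : ℝ)) ^ 2)
      _ = ∑ B ∈ G, ∑ i ∈ B, (y i - (∑ j ∈ blk i, y j) / ((blk i).card : ℝ)) ^ 2 := by
          rw [← hunG]
          exact Finset.sum_biUnion (f := fun i => (y i - (∑ j ∈ blk i, y j) / ((blk i).card : ℝ)) ^ 2)
            (fun B hB B' hB' hne' => hdisj B (hGsub hB) B' (hGsub hB') hne')
      _ = ∑ B ∈ G, sse y B := by
          refine Finset.sum_congr rfl fun B hB => Finset.sum_congr rfl fun i hi => ?_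
          rw [hblk_eq B hB i hi]
  have hkm : kMeansObj y G.card S ≤ ∑ B ∈ G, sse y B := by
    rw [← hsum]; exact kMeansObj_le y G.card S A z
  -- bound the infimum
  have hNpos : (0:ℝ) < N := by exact_mod_cast hN
  have hinv : (0:ℝ) ≤ 1 / (N:ℝ) := by positivity
  have hbdd : BddBelow (Set.range fun C : {C : ℕ // 1 ≤ C} =>
      (1 / (N : ℝ)) * kMeansObj y C.1 S + lam * (C.1 : ℝ)) := by
    refine ⟨0, ?_⟩
    rintro x ⟨C, rfl⟩
    have := kMeansObj_nonneg y C.1 S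
    positivity
  have hinf : (⨅ C : {C : ℕ // 1 ≤ C},
      ((1 / (N : ℝ)) * kMeansObj y C.1 S + lam * (C.1 : ℝ)))
      ≤ (1 / (N : ℝ)) * ∑ B ∈ G, sse y B + lam * (G.card : ℝ) := by
    refine le_trans (ciInf_le hbdd ⟨G.card, hGcard⟩) ?_
    exact add_le_add (mul_le_mul_of_nonneg_left hkm hinv) le_rfl
  -- combine
  have hsumP : ∑ B ∈ G, sse y B + ∑ B ∈ F, sse y B = ∑ B ∈ P, sse y B :=
    Finset.sum_sdiff hFP
  have hcardP : G.card + F.card = P.card := Finset.card_sdiff_add_card_eq_card hFP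
  have hcardP' : (P.card : ℝ) = (G.card : ℝ) + (F.card : ℝ) := by
    exact_mod_cast hcardP.symm
  rw [Robj, ← hsumP, hcardP']
  have := add_le_add (le_refl
    ((1 / (N : ℝ)) * ∑ B ∈ F, sse y B + lam * (F.card : ℝ))) hinf
  refine le_trans this (le_of_eq ?_)
  ring
end

section
/- Let λ ≥ 0, let P be a feature-consistent partition of Fin N, and let F be a proper subset of the set of blocks of P with K = |F|. Let S = Fin N minus the union of the blocks in F (S is nonempty since F is proper). Then R(P) ≥ (1/N)·∑_{B∈F} SSE(B) + λ·K + inf over integers C ≥ 1 of ( (1/N)·ConskMeans(C, S) + λ·C ). (k-Means Equivalent Points Lower Bound: strengthening the k-Means lower bound by additionally requiring that equivalent points, which can never be separated by a tree, be assigned to the same cluster.) -/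
open Finset

/-- Constrained 1D k-means objective: as `kMeansObj`, but points with identical feature
vectors must be assigned to the same cluster. -/
noncomputable def consKMeans {N M : ℕ} (x : Fin N → Fin M → Bool) (y : Fin N → ℝ)
    (C : ℕ) (S : Finset (Fin N)) : ℝ :=
  ⨅ (A : {A : {i // i ∈ S} → Fin C // ∀ i j, x i.1 = x j.1 → A i = A j})
    (z : Fin C → ℝ), ∑ i ∈ S.attach, (y i.1 - z (A.1 i)) ^ 2

/-- **k-Means Equivalent Points Lower Bound.** For `λ ≥ 0`, a feature-consistent
partition `P` of `Fin N` and a proper subset `F` of its blocks with `K = |F|`, letting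
`S = Fin N \ ⋃ F`,
`R(P) ≥ (1/N)·∑_{B∈F} SSE(B) + λ·K + inf_{C ≥ 1} ((1/N)·ConskMeans(C,S) + λ·C)`. -/
theorem kmeans_equivalent_points_lower_bound
    {N M : ℕ} (hN : 1 ≤ N) (x : Fin N → Fin M → Bool) (y : Fin N → ℝ)
    (lam : ℝ) (hlam : 0 ≤ lam)
    (P : Finset (Finset (Fin N))) (hP : IsPartitionOn Finset.univ P)
    (hPx : FeatureConsistent x P)
    (F : Finset (Finset (Fin N))) (hF : F ⊂ P) :
    (1 / (N : ℝ)) * ∑ B ∈ F, sse y B + lam * (F.card : ℝ)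
      + ⨅ C : {C : ℕ // 1 ≤ C},
          ((1 / (N : ℝ)) * consKMeans x y C.1 (Finset.univ \ F.biUnion id) + lam * (C.1 : ℝ))
      ≤ Robj y lam P := by

  classical
  obtain ⟨hne, hdisj, hcover⟩ := hP
  set S : Finset (Fin N) := Finset.univ \ F.biUnion id with hSdef
  set Q : Finset (Finset (Fin N)) := P \ F with hQdef
  have hFP : F ⊆ P := hF.subset
  have hQP : Q ⊆ P := Finset.sdiff_subset
  have hQne : Q.Nonempty := by
    obtain ⟨B, hBP, hBF⟩ := Finset.exists_of_ssubset hF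
    exact ⟨B, Finset.mem_sdiff.mpr ⟨hBP, hBF⟩⟩
  have hSQ : Q.biUnion id = S := by
    ext i
    constructor
    · intro hi
      obtain ⟨B, hBQ, hiB⟩ := Finset.mem_biUnion.mp hi
      obtain ⟨hBP, hBF⟩ := Finset.mem_sdiff.mp hBQ
      refine Finset.mem_sdiff.mpr ⟨Finset.mem_univ _, ?_⟩
      intro hiF
      obtain ⟨B', hB'F, hiB'⟩ := Finset.mem_biUnion.mp hiF
      have hBB' : B ≠ B' := fun h => hBF (h ▸ hB'F)
      exact Finset.disjoint_left.mp (hdisj B hBP B' (hFP hB'F) hBB') hiB hiB'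
    · intro hi
      obtain ⟨-, hiF⟩ := Finset.mem_sdiff.mp hi
      have : i ∈ P.biUnion id := hcover ▸ Finset.mem_univ i
      obtain ⟨B, hBP, hiB⟩ := Finset.mem_biUnion.mp this
      have hBF : B ∉ F := fun h => hiF (Finset.mem_biUnion.mpr ⟨B, h, hiB⟩)
      exact Finset.mem_biUnion.mpr ⟨B, Finset.mem_sdiff.mpr ⟨hBP, hBF⟩, hiB⟩
  have hex : ∀ i : Fin N, i ∈ S → ∃! B, B ∈ Q ∧ i ∈ B := by
    intro i hi
    obtain ⟨B, hBQ, hiB⟩ := Finset.mem_biUnion.mp (hSQ ▸ hi)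
    refine ⟨B, ⟨hBQ, hiB⟩, ?_⟩
    rintro B' ⟨hB'Q, hiB'⟩
    by_contra hne'
    exact Finset.disjoint_left.mp (hdisj B' (hQP hB'Q) B (hQP hBQ) hne') hiB' hiB
  let blkT : Fin N → Finset (Fin N) := fun i =>
    if h : i ∈ S then Finset.choose (fun B => i ∈ B) Q (hex i h) else ∅
  have hblkQ : ∀ i : Fin N, ∀ h : i ∈ S, blkT i ∈ Q ∧ i ∈ blkT i := by
    intro i h
    simp only [blkT, dif_pos h]
    exact ⟨Finset.choose_mem (fun B => i ∈ B) Q (hex i h),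
      Finset.choose_property (fun B => i ∈ B) Q (hex i h)⟩
  have hblk_eq : ∀ i : Fin N, ∀ h : i ∈ S, ∀ B, B ∈ Q → i ∈ B → blkT i = B := by
    intro i h B hBQ hiB
    exact (hex i h).unique ⟨(hblkQ i h).1, (hblkQ i h).2⟩ ⟨hBQ, hiB⟩
  let e : {B // B ∈ Q} ≃ Fin Q.card := Q.equivFin
  let A0 : {i // i ∈ S} → Fin Q.card := fun i => e ⟨blkT i.1, (hblkQ i.1 i.2).1⟩
  have hA0 : ∀ i j : {i // i ∈ S}, x i.1 = x j.1 → A0 i = A0 j := by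
    intro i j hxij
    have h1 := hblkQ i.1 i.2
    have h2 : j.1 ∈ blkT i.1 := hPx i.1 j.1 hxij _ (hQP h1.1) h1.2
    have h3 : blkT j.1 = blkT i.1 := hblk_eq j.1 j.2 _ h1.1 h2
    exact (congrArg e (Subtype.ext h3)).symm
  let z0 : Fin Q.card → ℝ := fun k => (∑ j ∈ (e.symm k).1, y j) / ((e.symm k).1.card : ℝ)
  have hsum : ∑ i ∈ S.attach, (y i.1 - z0 (A0 i)) ^ 2 = ∑ B ∈ Q, sse y B := by
    have h1 : ∀ i : {i // i ∈ S},
        z0 (A0 i) = (∑ j ∈ blkT i.1, y j) / ((blkT i.1).card : ℝ) := by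
      intro i
      simp only [z0, A0, Equiv.symm_apply_apply]
    calc ∑ i ∈ S.attach, (y i.1 - z0 (A0 i)) ^ 2
        = ∑ i ∈ S.attach, (y i.1 - (∑ j ∈ blkT i.1, y j) / ((blkT i.1).card : ℝ)) ^ 2 :=
          Finset.sum_congr rfl fun i _ => by rw [h1]
      _ = ∑ i ∈ S, (y i - (∑ j ∈ blkT i, y j) / ((blkT i).card : ℝ)) ^ 2 :=
          Finset.sum_attach S (fun i => (y i - (∑ j ∈ blkT i, y j) / ((blkT i).card : ℝ)) ^ 2)
      _ = ∑ B ∈ Q, ∑ i ∈ B, (y i - (∑ j ∈ blkT i, y j) / ((blkT i).card : ℝ)) ^ 2 := by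
          rw [← hSQ]
          exact Finset.sum_biUnion
            (fun B hB B' hB' hne' => hdisj B (hQP hB) B' (hQP hB') hne')
      _ = ∑ B ∈ Q, sse y B := by
          refine Finset.sum_congr rfl fun B hB => ?_
          refine Finset.sum_congr rfl fun i hi => ?_
          have hiS : i ∈ S := hSQ ▸ Finset.mem_biUnion.mpr ⟨B, hB, hi⟩
          rw [hblk_eq i hiS B hB hi]
  have hcons_le : consKMeans x y Q.card S ≤ ∑ B ∈ Q, sse y B := by
    rw [← hsum]
    unfold consKMeans
    refine ciInf_le_of_le ?_ ⟨A0, hA0⟩ (ciInf_le_of_le ?_ z0 le_rfl)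
    · refine ⟨0, ?_⟩
      rintro r ⟨A, rfl⟩
      exact Real.iInf_nonneg fun z => Finset.sum_nonneg fun i _ => sq_nonneg _
    · refine ⟨0, ?_⟩
      rintro r ⟨z, rfl⟩
      exact Finset.sum_nonneg fun i _ => sq_nonneg _
  have hcons_nonneg : ∀ C : ℕ, 0 ≤ consKMeans x y C S := by
    intro C
    exact Real.iInf_nonneg fun A => Real.iInf_nonneg fun z =>
      Finset.sum_nonneg fun i _ => sq_nonneg _
  have hNpos : (0:ℝ) < (N : ℝ) := by exact_mod_cast hN
  have hN' : (0:ℝ) ≤ 1 / (N : ℝ) := by positivity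
  have hCpos : 1 ≤ Q.card := Finset.card_pos.mpr hQne
  have hinf_le : (⨅ C : {C : ℕ // 1 ≤ C},
      ((1 / (N : ℝ)) * consKMeans x y C.1 S + lam * (C.1 : ℝ)))
      ≤ (1 / (N : ℝ)) * consKMeans x y Q.card S + lam * (Q.card : ℝ) := by
    refine ciInf_le ?_ (⟨Q.card, hCpos⟩ : {C : ℕ // 1 ≤ C})
    refine ⟨0, ?_⟩
    rintro r ⟨C, rfl⟩
    have := hcons_nonneg C.1
    positivity
  have h2 : (1 / (N : ℝ)) * consKMeans x y Q.card S ≤ (1 / (N : ℝ)) * ∑ B ∈ Q, sse y B :=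
    mul_le_mul_of_nonneg_left hcons_le hN'
  have hsplit_sum : ∑ B ∈ P, sse y B = ∑ B ∈ F, sse y B + ∑ B ∈ Q, sse y B := by
    rw [← Finset.sum_sdiff hFP]
    ring
  have hsplit_card : (P.card : ℝ) = (F.card : ℝ) + (Q.card : ℝ) := by
    rw [← Finset.card_sdiff_add_card_eq_card hFP]
    push_cast
    ring
  unfold Robj
  rw [hsplit_sum, hsplit_card]
  rw [mul_add, mul_add]
  linarith [hinf_le, h2]
end

section
/- Fix N ≥ 1, features x : Fin N → (Fin M → Bool), targets y : Fin N → ℝ, and an integer C ≥ 1. Let U be the (finite, nonempty) image of x; for each u ∈ U let F_u = {i : x i = u} be the fiber of equivalent points, let w_u = |F_u| and let v_u = (∑_{i∈F_u} y i)/|F_u|. Then ConskMeans(C, Fin N) = W(C) + ∑_{u∈U} ∑_{i∈F_u} (y i − v_u)², where W(C) is the weighted k-means objective for the modified dataset of |U| points v with weights w. (Constrained k-Means with equivalent points equals weighted k-Means on the modified dataset, up to the constant correction term equal to the total within-fiber sum of squared errors, which also equals ∑_i (y i)² − ∑_{u∈U} w_u·v_u².) -/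
open Finset

/-- Weighted k-means objective for points `v` with (positive) weights `w` and `C` clusters. -/
noncomputable def wKMeans {ι : Type*} [Fintype ι] (v w : ι → ℝ) (C : ℕ) : ℝ :=
  ⨅ (A : ι → Fin C) (z : Fin C → ℝ), ∑ j, w j * (v j - z (A j)) ^ 2


lemma bias_var {N : ℕ} (y : Fin N → ℝ) (F : Finset (Fin N)) (hF : F.Nonempty) (c : ℝ) :
    ∑ i ∈ F, (y i - c)^2
      = (F.card : ℝ) * ((∑ i ∈ F, y i) / F.card - c)^2
        + ∑ i ∈ F, (y i - (∑ j ∈ F, y j) / F.card)^2 := by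
  have hc : (F.card : ℝ) ≠ 0 := Nat.cast_ne_zero.mpr (card_pos.mpr hF).ne'
  set m : ℝ := (∑ j ∈ F, y j) / F.card with hm
  have hcm : (F.card : ℝ) * m = ∑ j ∈ F, y j := by rw [hm]; field_simp
  have hsum : ∑ i ∈ F, (y i - m) = 0 := by
    rw [Finset.sum_sub_distrib, Finset.sum_const, nsmul_eq_mul, hcm, sub_self]
  have expand : ∀ i ∈ F, (y i - c)^2 = (y i - m)^2 + (2*(m - c))*(y i - m) + (m - c)^2 := by
    intro i _; ring
  rw [Finset.sum_congr rfl expand, Finset.sum_add_distrib, Finset.sum_add_distrib,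
    ← Finset.mul_sum, hsum, mul_zero, Finset.sum_const, nsmul_eq_mul]
  ring

lemma sum_decomp {N M : ℕ} (x : Fin N → Fin M → Bool) (y : Fin N → ℝ) {C : ℕ}
    (A : {i // i ∈ (Finset.univ : Finset (Fin N))} → Fin C)
    (B : {u // u ∈ Finset.univ.image x} → Fin C)
    (hAB : ∀ i, A i = B ⟨x i.1, mem_image_of_mem x (mem_univ i.1)⟩)
    (z : Fin C → ℝ) :
    ∑ i ∈ (Finset.univ : Finset (Fin N)).attach, (y i.1 - z (A i)) ^ 2
      = (∑ u : {u // u ∈ Finset.univ.image x},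
          ((Finset.univ.filter (fun i => x i = u.1)).card : ℝ) *
            ((∑ i ∈ Finset.univ.filter (fun i => x i = u.1), y i)
              / ((Finset.univ.filter (fun i => x i = u.1)).card : ℝ) - z (B u)) ^ 2)
        + ∑ u ∈ Finset.univ.image x,
            ∑ i ∈ Finset.univ.filter (fun i => x i = u),
              (y i - (∑ j ∈ Finset.univ.filter (fun j => x j = u), y j)
                  / ((Finset.univ.filter (fun j => x j = u)).card : ℝ)) ^ 2 := by
  have key : ∀ u : {u // u ∈ Finset.univ.image x},
      ∑ i ∈ Finset.univ.filter (fun i => x i = u.1),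
          (y i - z (B ⟨x i, mem_image_of_mem x (mem_univ i)⟩)) ^ 2
        = ((Finset.univ.filter (fun i => x i = u.1)).card : ℝ) *
            ((∑ i ∈ Finset.univ.filter (fun i => x i = u.1), y i)
              / ((Finset.univ.filter (fun i => x i = u.1)).card : ℝ) - z (B u)) ^ 2
          + ∑ i ∈ Finset.univ.filter (fun i => x i = u.1),
              (y i - (∑ j ∈ Finset.univ.filter (fun j => x j = u.1), y j)
                  / ((Finset.univ.filter (fun j => x j = u.1)).card : ℝ)) ^ 2 := by
    intro u
    have hne : (Finset.univ.filter (fun i => x i = u.1)).Nonempty := by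
      obtain ⟨i, -, hi⟩ := Finset.mem_image.mp u.2
      exact ⟨i, Finset.mem_filter.mpr ⟨Finset.mem_univ i, hi⟩⟩
    have hcongr : ∀ i ∈ Finset.univ.filter (fun i => x i = u.1),
        (y i - z (B ⟨x i, mem_image_of_mem x (mem_univ i)⟩)) ^ 2
          = (y i - z (B u)) ^ 2 := by
      intro i hi
      have hx : x i = u.1 := by simpa using (Finset.mem_filter.mp hi).2
      have hsub : (⟨x i, mem_image_of_mem x (mem_univ i)⟩ : {u // u ∈ Finset.univ.image x}) = u :=
        Subtype.ext hx
      rw [hsub]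
    rw [Finset.sum_congr rfl hcongr]
    exact bias_var y _ hne _
  calc ∑ i ∈ (Finset.univ : Finset (Fin N)).attach, (y i.1 - z (A i)) ^ 2
      = ∑ i : Fin N, (y i - z (B ⟨x i, mem_image_of_mem x (mem_univ i)⟩)) ^ 2 := by
        rw [Finset.sum_congr rfl (fun i _ => by rw [hAB i])]
        exact Finset.sum_attach Finset.univ
          (fun i => (y i - z (B ⟨x i, mem_image_of_mem x (mem_univ i)⟩)) ^ 2)
    _ = ∑ u ∈ Finset.univ.image x, ∑ i ∈ Finset.univ.filter (fun i => x i = u),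
          (y i - z (B ⟨x i, mem_image_of_mem x (mem_univ i)⟩)) ^ 2 :=
        (Finset.sum_fiberwise_of_maps_to (fun i _ => mem_image_of_mem x (mem_univ i)) _).symm
    _ = ∑ u ∈ (Finset.univ.image x).attach, ∑ i ∈ Finset.univ.filter (fun i => x i = u.1),
          (y i - z (B ⟨x i, mem_image_of_mem x (mem_univ i)⟩)) ^ 2 :=
        (Finset.sum_attach _ _).symm
    _ = ∑ u ∈ (Finset.univ.image x).attach,
          (((Finset.univ.filter (fun i => x i = u.1)).card : ℝ) *
            ((∑ i ∈ Finset.univ.filter (fun i => x i = u.1), y i)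
              / ((Finset.univ.filter (fun i => x i = u.1)).card : ℝ) - z (B u)) ^ 2
          + ∑ i ∈ Finset.univ.filter (fun i => x i = u.1),
              (y i - (∑ j ∈ Finset.univ.filter (fun j => x j = u.1), y j)
                  / ((Finset.univ.filter (fun j => x j = u.1)).card : ℝ)) ^ 2) :=
        Finset.sum_congr rfl fun u _ => key u
    _ = _ := by
        rw [Finset.sum_add_distrib, Finset.univ_eq_attach]
        congr 1
        exact Finset.sum_attach (Finset.univ.image x)
          (fun u => ∑ i ∈ Finset.univ.filter (fun i => x i = u),
              (y i - (∑ j ∈ Finset.univ.filter (fun j => x j = u), y j)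
                  / ((Finset.univ.filter (fun j => x j = u)).card : ℝ)) ^ 2)

/-- **Constrained k-Means** -/
theorem cons_kmeans_eq_weighted_kmeans
    {N M : ℕ} (hN : 1 ≤ N) (x : Fin N → Fin M → Bool) (y : Fin N → ℝ)
    (C : ℕ) (hC : 1 ≤ C) :
    consKMeans x y C Finset.univ
      = wKMeans
          (fun u : {u // u ∈ Finset.univ.image x} =>
            (∑ i ∈ Finset.univ.filter (fun i => x i = u.1), y i)
              / ((Finset.univ.filter (fun i => x i = u.1)).card : ℝ))
          (fun u : {u // u ∈ Finset.univ.image x} =>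
            ((Finset.univ.filter (fun i => x i = u.1)).card : ℝ)) C
        + ∑ u ∈ Finset.univ.image x,
            ∑ i ∈ Finset.univ.filter (fun i => x i = u),
              (y i - (∑ j ∈ Finset.univ.filter (fun j => x j = u), y j)
                  / ((Finset.univ.filter (fun j => x j = u)).card : ℝ)) ^ 2 := by
  haveI : NeZero C := ⟨Nat.one_le_iff_ne_zero.mp hC⟩
  haveI hFinC : Nonempty (Fin C) := ⟨⟨0, hC⟩⟩
  set ι := {u // u ∈ Finset.univ.image x} with hι
  haveI hιne : Nonempty ι :=
    ⟨⟨x ⟨0, hN⟩, mem_image_of_mem x (mem_univ _)⟩⟩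
  -- notation
  set K : ℝ := ∑ u ∈ Finset.univ.image x,
      ∑ i ∈ Finset.univ.filter (fun i => x i = u),
        (y i - (∑ j ∈ Finset.univ.filter (fun j => x j = u), y j)
            / ((Finset.univ.filter (fun j => x j = u)).card : ℝ)) ^ 2 with hK
  set S2 : (ι → Fin C) → (Fin C → ℝ) → ℝ := fun B z =>
      ∑ u : ι, ((Finset.univ.filter (fun i => x i = u.1)).card : ℝ) *
        ((∑ i ∈ Finset.univ.filter (fun i => x i = u.1), y i)
          / ((Finset.univ.filter (fun i => x i = u.1)).card : ℝ) - z (B u)) ^ 2 with hS2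
  set ConA := {A : {i // i ∈ (Finset.univ : Finset (Fin N))} → Fin C //
      ∀ i j, x i.1 = x j.1 → A i = A j} with hConA
  haveI : Nonempty ConA := ⟨⟨fun _ => Classical.arbitrary _, fun _ _ _ => rfl⟩⟩
  set S1 : ConA → (Fin C → ℝ) → ℝ := fun A z =>
      ∑ i ∈ (Finset.univ : Finset (Fin N)).attach, (y i.1 - z (A.1 i)) ^ 2 with hS1
  have hS2nonneg : ∀ B z, 0 ≤ S2 B z := by
    intro B z
    refine Finset.sum_nonneg fun u _ => mul_nonneg (Nat.cast_nonneg _) (sq_nonneg _)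
  -- given constrained A, build B
  have key1 : ∀ (A : ConA) (z : Fin C → ℝ), ∃ B : ι → Fin C, S1 A z = S2 B z + K := by
    intro A z
    have pick : ∀ u : ι, ∃ i : Fin N, x i = u.1 := by
      intro u
      obtain ⟨i, -, hi⟩ := Finset.mem_image.mp u.2
      exact ⟨i, hi⟩
    refine ⟨fun u => A.1 ⟨(pick u).choose, mem_univ _⟩, ?_⟩
    refine sum_decomp x y A.1 _ (fun i => ?_) z
    exact A.2 i ⟨(pick ⟨x i.1, mem_image_of_mem x (mem_univ i.1)⟩).choose, mem_univ _⟩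
      (pick ⟨x i.1, mem_image_of_mem x (mem_univ i.1)⟩).choose_spec.symm
  -- given B, build constrained A
  have key2 : ∀ (B : ι → Fin C) (z : Fin C → ℝ), ∃ A : ConA, S1 A z = S2 B z + K := by
    intro B z
    refine ⟨⟨fun i => B ⟨x i.1, mem_image_of_mem x (mem_univ i.1)⟩,
      fun i j hij => congrArg B (Subtype.ext hij)⟩, ?_⟩
    exact sum_decomp x y _ B (fun i => rfl) z
  have hKle : ∀ (A : ConA) (z : Fin C → ℝ), K ≤ S1 A z := by
    intro A z
    obtain ⟨B, hB⟩ := key1 A z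
    have := hS2nonneg B z
    linarith
  -- bddBelow facts
  have hb1 : ∀ A : ConA, BddBelow (Set.range fun z => S1 A z) := by
    intro A
    exact ⟨K, by rintro _ ⟨z, rfl⟩; exact hKle A z⟩
  have hb1' : BddBelow (Set.range fun A : ConA => ⨅ z, S1 A z) := by
    refine ⟨K, ?_⟩
    rintro _ ⟨A, rfl⟩
    exact le_ciInf (hKle A)
  have hb2 : ∀ B : ι → Fin C, BddBelow (Set.range fun z => S2 B z) := by
    intro B
    exact ⟨0, by rintro _ ⟨z, rfl⟩; exact hS2nonneg B z⟩
  have hb2' : BddBelow (Set.range fun B : ι → Fin C => ⨅ z, S2 B z) := by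
    refine ⟨0, ?_⟩
    rintro _ ⟨B, rfl⟩
    exact le_ciInf (hS2nonneg B)
  have hLHS : consKMeans x y C Finset.univ = ⨅ (A : ConA) (z : Fin C → ℝ), S1 A z := rfl
  have hRHS : wKMeans
          (fun u : {u // u ∈ Finset.univ.image x} =>
            (∑ i ∈ Finset.univ.filter (fun i => x i = u.1), y i)
              / ((Finset.univ.filter (fun i => x i = u.1)).card : ℝ))
          (fun u : {u // u ∈ Finset.univ.image x} =>
            ((Finset.univ.filter (fun i => x i = u.1)).card : ℝ)) C
      = ⨅ (B : ι → Fin C) (z : Fin C → ℝ), S2 B z := rfl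
  rw [hLHS, hRHS]
  apply le_antisymm
  · -- ⨅ S1 ≤ ⨅ S2 + K
    have h : ∀ (B : ι → Fin C) (z : Fin C → ℝ),
        (⨅ (A : ConA) (z : Fin C → ℝ), S1 A z) ≤ S2 B z + K := by
      intro B z
      obtain ⟨A, hA⟩ := key2 B z
      calc (⨅ (A : ConA) (z : Fin C → ℝ), S1 A z) ≤ ⨅ z, S1 A z :=
            ciInf_le hb1' A
        _ ≤ S1 A z := ciInf_le (hb1 A) z
        _ = S2 B z + K := hA
    have h2 : (⨅ (A : ConA) (z : Fin C → ℝ), S1 A z) - K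
        ≤ ⨅ (B : ι → Fin C) (z : Fin C → ℝ), S2 B z := by
      refine le_ciInf fun B => le_ciInf fun z => ?_
      linarith [h B z]
    linarith
  · -- ⨅ S2 + K ≤ ⨅ S1
    refine le_ciInf fun A => le_ciInf fun z => ?_
    obtain ⟨B, hB⟩ := key1 A z
    have : (⨅ (B : ι → Fin C) (z : Fin C → ℝ), S2 B z) ≤ S2 B z :=
      le_trans (ciInf_le hb2' B) (ciInf_le (hb2 B) z)
    linarith
end

section
/- Fix N ≥ 1, features x : Fin N → (Fin M → Bool), targets y : Fin N → ℝ, and an integer C ≥ 1. Let U be the image of x; for each u ∈ U let F_u = {i : x i = u}, w_u = |F_u|, and v_u = (∑_{i∈F_u} y i)/|F_u|. Suppose an assignment Â : U → Fin C and centers ẑ : Fin C → ℝ attain the weighted k-means objective W(C) for the points (v_u) with weights (w_u), i.e. ∑_{u∈U} w_u·(v_u − ẑ(Â u))² = W(C). Then the induced assignment A : Fin N → Fin C defined by A i = Â(x i), together with the same centers ẑ, attains the constrained k-means objective: ∑_{i} (y i − ẑ(A i))² = ConskMeans(C, Fin N). (An optimal clustering of the modified weighted dataset directly provides an optimal clustering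 of the original dataset under the equivalent-points constraint.) -/
open Finset

lemma bias_var_s6 {ι : Type*} (s : Finset ι) (f : ι → ℝ) (c : ℝ) (hs : s.Nonempty) :
    ∑ i ∈ s, (f i - c) ^ 2
      = ∑ i ∈ s, (f i - (∑ j ∈ s, f j) / (s.card : ℝ)) ^ 2
        + (s.card : ℝ) * ((∑ j ∈ s, f j) / (s.card : ℝ) - c) ^ 2 := by
  have hn : (s.card : ℝ) ≠ 0 := by
    exact_mod_cast (Finset.card_pos.mpr hs).ne'
  set m : ℝ := (∑ j ∈ s, f j) / (s.card : ℝ) with hm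
  have hsum : ∑ j ∈ s, f j = (s.card : ℝ) * m := by
    rw [hm]; field_simp
  have expand : ∀ i ∈ s, (f i - c) ^ 2
      = (f i - m) ^ 2 + (2 * (m - c)) * (f i - m) + (m - c) ^ 2 := by
    intro i _; ring
  rw [Finset.sum_congr rfl expand]
  rw [Finset.sum_add_distrib, Finset.sum_add_distrib, ← Finset.mul_sum,
    Finset.sum_sub_distrib, Finset.sum_const, Finset.sum_const, hsum,
    nsmul_eq_mul, nsmul_eq_mul]
  ring

lemma main_identity {N M C : ℕ} (x : Fin N → Fin M → Bool) (y : Fin N → ℝ)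
    (B : {u // u ∈ Finset.univ.image x} → Fin C) (z : Fin C → ℝ) :
    ∑ i : Fin N, (y i - z (B ⟨x i, Finset.mem_image_of_mem x (Finset.mem_univ i)⟩)) ^ 2
      = (∑ u : {u // u ∈ Finset.univ.image x},
            ∑ i ∈ Finset.univ.filter (fun i => x i = u.1),
              (y i - (∑ j ∈ Finset.univ.filter (fun j => x j = u.1), y j)
                 / ((Finset.univ.filter (fun j => x j = u.1)).card : ℝ)) ^ 2)
        + ∑ u : {u // u ∈ Finset.univ.image x},
            ((Finset.univ.filter (fun i => x i = u.1)).card : ℝ)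
              * ((∑ i ∈ Finset.univ.filter (fun i => x i = u.1), y i)
                   / ((Finset.univ.filter (fun i => x i = u.1)).card : ℝ) - z (B u)) ^ 2 := by
  rw [← Finset.sum_add_distrib]
  have hfib : ∀ u : {u // u ∈ Finset.univ.image x},
      (Finset.univ.filter (fun i => x i = u.1)).Nonempty := by
    rintro ⟨u, hu⟩
    obtain ⟨i, -, hi⟩ := Finset.mem_image.mp hu
    exact ⟨i, Finset.mem_filter.mpr ⟨Finset.mem_univ i, hi⟩⟩
  have step1 : ∀ u : {u // u ∈ Finset.univ.image x},
      (∑ i ∈ Finset.univ.filter (fun i => x i = u.1),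
          (y i - (∑ j ∈ Finset.univ.filter (fun j => x j = u.1), y j)
             / ((Finset.univ.filter (fun j => x j = u.1)).card : ℝ)) ^ 2)
        + ((Finset.univ.filter (fun i => x i = u.1)).card : ℝ)
            * ((∑ i ∈ Finset.univ.filter (fun i => x i = u.1), y i)
                 / ((Finset.univ.filter (fun i => x i = u.1)).card : ℝ) - z (B u)) ^ 2
      = ∑ i ∈ Finset.univ.filter (fun i => x i = u.1), (y i - z (B u)) ^ 2 := by
    intro u
    exact (bias_var_s6 _ y (z (B u)) (hfib u)).symm
  rw [Finset.sum_congr rfl (fun u _ => step1 u)]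
  have step2 : ∀ u : {u // u ∈ Finset.univ.image x},
      ∑ i ∈ Finset.univ.filter (fun i => x i = u.1), (y i - z (B u)) ^ 2
        = ∑ i ∈ Finset.univ.filter (fun i => x i = u.1),
            (y i - z (B ⟨x i, Finset.mem_image_of_mem x (Finset.mem_univ i)⟩)) ^ 2 := by
    intro u
    refine Finset.sum_congr rfl (fun i hi => ?_)
    have hx : x i = u.1 := (Finset.mem_filter.mp hi).2
    have he : (⟨x i, Finset.mem_image_of_mem x (Finset.mem_univ i)⟩
        : {u // u ∈ Finset.univ.image x}) = u := Subtype.ext hx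
    rw [he]
  rw [Finset.sum_congr rfl (fun u _ => step2 u)]
  rw [Finset.sum_coe_sort (Finset.univ.image x)
    (fun u => ∑ i ∈ Finset.univ.filter (fun i => x i = u),
        (y i - z (B ⟨x i, Finset.mem_image_of_mem x (Finset.mem_univ i)⟩)) ^ 2)]
  exact (Finset.sum_fiberwise_of_maps_to
    (fun i _ => Finset.mem_image_of_mem x (Finset.mem_univ i)) _).symm

/-- **Optimal weighted clustering induces optimal constrained clustering.** If an
assignment `Â` of fibers to clusters together with centers `ẑ` attains the weighted
k-means objective on the modified dataset (fiber means with fiber sizes as weights),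
then the induced assignment `A i = Â (x i)` with the same centers attains the
constrained k-means objective on the original dataset. -/
theorem weighted_optimum_induces_constrained_optimum
    {N M : ℕ} (hN : 1 ≤ N) (x : Fin N → Fin M → Bool) (y : Fin N → ℝ)
    (C : ℕ) (hC : 1 ≤ C)
    (Ahat : {u // u ∈ Finset.univ.image x} → Fin C) (zhat : Fin C → ℝ)
    (hopt : ∑ u : {u // u ∈ Finset.univ.image x},
        ((Finset.univ.filter (fun i => x i = u.1)).card : ℝ)
          * ((∑ i ∈ Finset.univ.filter (fun i => x i = u.1), y i)
                / ((Finset.univ.filter (fun i => x i = u.1)).card : ℝ)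
              - zhat (Ahat u)) ^ 2
      = wKMeans
          (fun u : {u // u ∈ Finset.univ.image x} =>
            (∑ i ∈ Finset.univ.filter (fun i => x i = u.1), y i)
              / ((Finset.univ.filter (fun i => x i = u.1)).card : ℝ))
          (fun u : {u // u ∈ Finset.univ.image x} =>
            ((Finset.univ.filter (fun i => x i = u.1)).card : ℝ)) C) :
    ∑ i : Fin N,
        (y i - zhat (Ahat ⟨x i, Finset.mem_image_of_mem x (Finset.mem_univ i)⟩)) ^ 2
      = consKMeans x y C Finset.univ := by
  haveI : Nonempty (Fin C) := ⟨⟨0, hC⟩⟩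
  set v : {u // u ∈ Finset.univ.image x} → ℝ := fun u =>
    (∑ i ∈ Finset.univ.filter (fun i => x i = u.1), y i)
      / ((Finset.univ.filter (fun i => x i = u.1)).card : ℝ) with hv
  set w : {u // u ∈ Finset.univ.image x} → ℝ := fun u =>
    ((Finset.univ.filter (fun i => x i = u.1)).card : ℝ) with hw
  set K : ℝ := ∑ u : {u // u ∈ Finset.univ.image x},
      ∑ i ∈ Finset.univ.filter (fun i => x i = u.1),
        (y i - (∑ j ∈ Finset.univ.filter (fun j => x j = u.1), y j)
           / ((Finset.univ.filter (fun j => x j = u.1)).card : ℝ)) ^ 2 with hK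
  set Wk : ℝ := wKMeans v w C with hWk
  have hwpos : ∀ u, 0 ≤ w u := fun u => Nat.cast_nonneg _
  -- step A: LHS equals K + Wk
  have stepA : ∑ i : Fin N,
      (y i - zhat (Ahat ⟨x i, Finset.mem_image_of_mem x (Finset.mem_univ i)⟩)) ^ 2
      = K + Wk := by
    rw [main_identity x y Ahat zhat, hopt]
  -- bounded below facts
  have hbdd_w_inner : ∀ (A : {u // u ∈ Finset.univ.image x} → Fin C),
      BddBelow (Set.range (fun z : Fin C → ℝ => ∑ j, w j * (v j - z (A j)) ^ 2)) := by
    intro A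
    refine ⟨0, ?_⟩
    rintro _ ⟨z, rfl⟩
    exact Finset.sum_nonneg fun j _ => mul_nonneg (hwpos j) (sq_nonneg _)
  have hbdd_w_outer : BddBelow (Set.range (fun A : {u // u ∈ Finset.univ.image x} → Fin C =>
      ⨅ z : Fin C → ℝ, ∑ j, w j * (v j - z (A j)) ^ 2)) := by
    refine ⟨0, ?_⟩
    rintro _ ⟨A, rfl⟩
    exact Real.iInf_nonneg fun z =>
      Finset.sum_nonneg fun j _ => mul_nonneg (hwpos j) (sq_nonneg _)
  -- attach-sum conversion
  have hattach : ∀ (A : {A : {i // i ∈ (Finset.univ : Finset (Fin N))} → Fin C //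
        ∀ i j, x i.1 = x j.1 → A i = A j}) (z : Fin C → ℝ),
      ∑ i ∈ Finset.univ.attach, (y i.1 - z (A.1 i)) ^ 2
        = ∑ i : Fin N, (y i - z (A.1 ⟨i, Finset.mem_univ i⟩)) ^ 2 := by
    intro A z
    rw [← Finset.sum_attach Finset.univ
      (fun j => (y j - z (A.1 ⟨j, Finset.mem_univ j⟩)) ^ 2)]
  -- Wk is a lower bound for each weighted assignment value
  have hWk_le : ∀ (B : {u // u ∈ Finset.univ.image x} → Fin C) (z : Fin C → ℝ),
      Wk ≤ ∑ j, w j * (v j - z (B j)) ^ 2 := by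
    intro B z
    refine le_trans (ciInf_le hbdd_w_outer B) ?_
    exact ciInf_le (hbdd_w_inner B) z
  -- instances for constrained subtype
  haveI : Nonempty {A : {i // i ∈ (Finset.univ : Finset (Fin N))} → Fin C //
      ∀ i j, x i.1 = x j.1 → A i = A j} :=
    ⟨⟨fun _ => ⟨0, hC⟩, fun _ _ _ => rfl⟩⟩
  -- direction 1: consKMeans ≤ K + Wk
  have le1 : consKMeans x y C Finset.univ ≤ K + Wk := by
    rw [← stepA]
    set A0 : {A : {i // i ∈ (Finset.univ : Finset (Fin N))} → Fin C //
        ∀ i j, x i.1 = x j.1 → A i = A j} :=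
      ⟨fun i => Ahat ⟨x i.1, Finset.mem_image_of_mem x (Finset.mem_univ i.1)⟩,
       fun i j h => congrArg Ahat (Subtype.ext h)⟩ with hA0
    have hbdd_outer : BddBelow (Set.range
        (fun A : {A : {i // i ∈ (Finset.univ : Finset (Fin N))} → Fin C //
            ∀ i j, x i.1 = x j.1 → A i = A j} =>
          ⨅ z : Fin C → ℝ, ∑ i ∈ Finset.univ.attach, (y i.1 - z (A.1 i)) ^ 2)) := by
      refine ⟨0, ?_⟩
      rintro _ ⟨A, rfl⟩
      exact Real.iInf_nonneg fun z => Finset.sum_nonneg fun i _ => sq_nonneg _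
    have hbdd_inner : BddBelow (Set.range
        (fun z : Fin C → ℝ => ∑ i ∈ Finset.univ.attach, (y i.1 - z (A0.1 i)) ^ 2)) := by
      refine ⟨0, ?_⟩
      rintro _ ⟨z, rfl⟩
      exact Finset.sum_nonneg fun i _ => sq_nonneg _
    refine le_trans (ciInf_le hbdd_outer A0) (le_trans (ciInf_le hbdd_inner zhat) ?_)
    rw [hattach A0 zhat]
  -- direction 2: K + Wk ≤ consKMeans
  have le2 : K + Wk ≤ consKMeans x y C Finset.univ := by
    refine le_ciInf fun A => le_ciInf fun z => ?_
    -- representative of each fiber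
    have hrepex : ∀ u : {u // u ∈ Finset.univ.image x}, ∃ i : Fin N, x i = u.1 := by
      rintro ⟨u, hu⟩
      obtain ⟨i, -, hi⟩ := Finset.mem_image.mp hu
      exact ⟨i, hi⟩
    choose rep hrep using hrepex
    set B : {u // u ∈ Finset.univ.image x} → Fin C := fun u => A.1 ⟨rep u, Finset.mem_univ _⟩ with hB
    have hBA : ∀ i : Fin N,
        B ⟨x i, Finset.mem_image_of_mem x (Finset.mem_univ i)⟩ = A.1 ⟨i, Finset.mem_univ i⟩ := by
      intro i
      exact A.2 _ _ (hrep ⟨x i, Finset.mem_image_of_mem x (Finset.mem_univ i)⟩)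
    have hEq : ∑ i ∈ Finset.univ.attach, (y i.1 - z (A.1 i)) ^ 2
        = K + ∑ u : {u // u ∈ Finset.univ.image x}, w u * (v u - z (B u)) ^ 2 := by
      rw [hattach A z]
      rw [show (∑ i : Fin N, (y i - z (A.1 ⟨i, Finset.mem_univ i⟩)) ^ 2)
          = ∑ i : Fin N, (y i - z (B ⟨x i, Finset.mem_image_of_mem x (Finset.mem_univ i)⟩)) ^ 2
        from Finset.sum_congr rfl fun i _ => by rw [hBA i]]
      exact main_identity x y B z
    rw [hEq]
    exact add_le_add (le_refl K) (hWk_le B z)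
  calc ∑ i : Fin N,
      (y i - zhat (Ahat ⟨x i, Finset.mem_image_of_mem x (Finset.mem_univ i)⟩)) ^ 2
      = K + Wk := stepA
    _ = consKMeans x y C Finset.univ := le_antisymm le2 le1
end

section
/- Let m ≥ 1, let v : Fin m → ℝ be points and w : Fin m → ℝ weights with w j > 0 for all j, and let W(C) denote the weighted k-means objective with C clusters. Then for every integer C ≥ 2, W(C−1) + W(C+1) ≥ 2·W(C). (Convexity of the weighted k-Means objective in the number of clusters: the loss reduction obtained by adding one more cluster is non-increasing in the number of clusters.) -/
open Finset

namespace WKMaux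

variable {m : ℕ}

/-- indicator of `a ≤ j < b` as a real number -/
def ind (m : ℕ) (a b : ℕ) (j : Fin m) : ℝ := if a ≤ j.val ∧ j.val < b then 1 else 0

lemma ind_nonneg (a b : ℕ) (j : Fin m) : 0 ≤ ind m a b j := by
  unfold ind; split <;> norm_num

lemma ind_cases (a b : ℕ) (j : Fin m) :
    ind m a b j = 0 ∨ (ind m a b j = 1 ∧ a ≤ j.val ∧ j.val < b) := by
  unfold ind; split_ifs with h
  · exact Or.inr ⟨rfl, h⟩
  · exact Or.inl rfl

lemma ind_eq_one (a b : ℕ) (j : Fin m) (h1 : a ≤ j.val) (h2 : j.val < b) :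
    ind m a b j = 1 := by
  unfold ind; rw [if_pos ⟨h1, h2⟩]

lemma ind_split {a b c : ℕ} (hab : a ≤ b) (hbc : b ≤ c) (j : Fin m) :
    ind m a c j = ind m a b j + ind m b c j := by
  unfold ind
  split_ifs <;> first | ring1 | (exfalso; omega)

section seg

variable (v w : Fin m → ℝ)

/-- cost of the segment `[a, b)` with center `z` -/
def seg (a b : ℕ) (z : ℝ) : ℝ := ∑ j, ind m a b j * (w j * (v j - z) ^ 2)

def tW (a b : ℕ) : ℝ := ∑ j, ind m a b j * w j

def sW (a b : ℕ) : ℝ := ∑ j, ind m a b j * (w j * v j)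

def qW (a b : ℕ) : ℝ := ∑ j, ind m a b j * (w j * (v j) ^ 2)

/-- weighted mean of segment `[a,b)` (junk value `0` if segment empty) -/
noncomputable def mu (a b : ℕ) : ℝ := sW v w a b / tW w a b

/-- optimal cost of segment `[a,b)` -/
noncomputable def gC (a b : ℕ) : ℝ := seg v w a b (mu v w a b)

lemma seg_nonneg (hw : ∀ j, 0 < w j) (a b : ℕ) (z : ℝ) : 0 ≤ seg v w a b z :=
  Finset.sum_nonneg fun j _ =>
    mul_nonneg (ind_nonneg a b j) (mul_nonneg (hw j).le (sq_nonneg _))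

lemma seg_eq (a b : ℕ) (z : ℝ) :
    seg v w a b z = qW v w a b - 2 * z * sW v w a b + z ^ 2 * tW w a b := by
  unfold seg qW sW tW
  rw [Finset.mul_sum, Finset.mul_sum, ← Finset.sum_sub_distrib, ← Finset.sum_add_distrib]
  exact Finset.sum_congr rfl fun j _ => by ring

lemma tW_nonneg (hw : ∀ j, 0 < w j) (a b : ℕ) : 0 ≤ tW w a b :=
  Finset.sum_nonneg fun j _ => mul_nonneg (ind_nonneg a b j) (hw j).le

lemma ind_eq_zero_of_tW (hw : ∀ j, 0 < w j) {a b : ℕ} (h : tW w a b = 0) (j : Fin m) :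
    ind m a b j = 0 := by
  rcases ind_cases a b j with h0 | ⟨h1, _⟩
  · exact h0
  · exfalso
    have hle : ind m a b j * w j ≤ tW w a b :=
      Finset.single_le_sum (f := fun j => ind m a b j * w j)
        (fun i _ => mul_nonneg (ind_nonneg a b i) (hw i).le) (Finset.mem_univ j)
    rw [h, h1, one_mul] at hle
    exact absurd hle (not_le.2 (hw j))

lemma sW_eq (hw : ∀ j, 0 < w j) (a b : ℕ) : sW v w a b = tW w a b * mu v w a b := by
  rcases eq_or_ne (tW w a b) 0 with h | h
  · have : sW v w a b = 0 := by
      unfold sW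
      exact Finset.sum_eq_zero fun j _ => by rw [ind_eq_zero_of_tW w hw h j, zero_mul]
    rw [this, h, zero_mul]
  · rw [mu, mul_div_cancel₀ _ h]

lemma seg_mu_le (hw : ∀ j, 0 < w j) (a b : ℕ) (z : ℝ) :
    seg v w a b (mu v w a b) ≤ seg v w a b z := by
  have hs := sW_eq v w hw a b
  have ht := tW_nonneg w hw a b
  rw [seg_eq, seg_eq, hs]
  nlinarith [mul_nonneg ht (sq_nonneg (z - mu v w a b))]

lemma gC_nonneg (hw : ∀ j, 0 < w j) (a b : ℕ) : 0 ≤ gC v w a b :=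
  seg_nonneg v w hw a b _

lemma gC_le_seg (hw : ∀ j, 0 < w j) (a b : ℕ) (z : ℝ) : gC v w a b ≤ seg v w a b z :=
  seg_mu_le v w hw a b z

lemma seg_split {a b c : ℕ} (hab : a ≤ b) (hbc : b ≤ c) (z : ℝ) :
    seg v w a c z = seg v w a b z + seg v w b c z := by
  unfold seg
  rw [← Finset.sum_add_distrib]
  exact Finset.sum_congr rfl fun j _ => by rw [ind_split hab hbc, add_mul]

lemma mu_le (hw : ∀ j, 0 < w j) {a b : ℕ} (ht : 0 < tW w a b) (x : ℝ)
    (h : ∀ j : Fin m, a ≤ j.val → j.val < b → v j ≤ x) : mu v w a b ≤ x := by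
  rw [mu, div_le_iff₀ ht]
  unfold sW tW
  rw [Finset.mul_sum]
  refine Finset.sum_le_sum fun j _ => ?_
  rcases ind_cases a b j with h0 | ⟨h1, h2, h3⟩
  · simp [h0]
  · simp only [h1, one_mul, mul_one]
    nlinarith [mul_le_mul_of_nonneg_right (h j h2 h3) (hw j).le]

lemma le_mu (hw : ∀ j, 0 < w j) {a b : ℕ} (ht : 0 < tW w a b) (x : ℝ)
    (h : ∀ j : Fin m, a ≤ j.val → j.val < b → x ≤ v j) : x ≤ mu v w a b := by
  rw [mu, le_div_iff₀ ht]
  unfold sW tW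
  rw [Finset.mul_sum]
  refine Finset.sum_le_sum fun j _ => ?_
  rcases ind_cases a b j with h0 | ⟨h1, h2, h3⟩
  · simp [h0]
  · simp only [h1, one_mul, mul_one]
    nlinarith [mul_le_mul_of_nonneg_right (h j h2 h3) (hw j).le]

/-- Quadrangle (concave Monge) inequality for the optimal segment cost. -/
lemma qi (hv : Monotone v) (hw : ∀ j, 0 < w j) {a a' b b' : ℕ}
    (h1 : a ≤ a') (h2 : a' ≤ b) (h3 : b ≤ b') :
    gC v w a b + gC v w a' b' ≤ gC v w a b' + gC v w a' b := by
  rcases (tW_nonneg w hw a' b).eq_or_lt with ht | ht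
  · -- middle segment is empty
    have hind : ∀ j : Fin m, ind m a' b j = 0 := ind_eq_zero_of_tW w hw ht.symm
    have hmid : ∀ z : ℝ, seg v w a' b z = 0 := fun z =>
      Finset.sum_eq_zero fun j _ => by rw [hind j, zero_mul]
    set z₀ := mu v w a b' with hz₀
    have e1 : seg v w a b z₀ = seg v w a a' z₀ := by
      rw [seg_split v w h1 h2, hmid, add_zero]
    have e2 : seg v w a' b' z₀ = seg v w b b' z₀ := by
      rw [seg_split v w h2 h3, hmid, zero_add]
    have e3 : gC v w a b' = seg v w a a' z₀ + seg v w b b' z₀ := by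
      rw [gC, ← hz₀, seg_split v w (h1.trans h2) h3, seg_split v w h1 h2, hmid, add_zero]
    have k1 : gC v w a b ≤ seg v w a a' z₀ := by
      rw [← e1]; exact gC_le_seg v w hw a b z₀
    have k2 : gC v w a' b' ≤ seg v w b b' z₀ := by
      rw [← e2]; exact gC_le_seg v w hw a' b' z₀
    have k3 : gC v w a' b = 0 := hmid _
    linarith
  · set z₁ := mu v w a b' with hz₁
    set z₂ := mu v w a' b with hz₂
    have hub : ∀ j : Fin m, b ≤ j.val → z₂ ≤ v j := by
      intro j hj
      refine mu_le v w hw ht (v j) fun i _ hi2 => hv ?_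
      rw [Fin.le_def]; omega
    have hlb : ∀ j : Fin m, j.val < a' → v j ≤ z₂ := by
      intro j hj
      refine le_mu v w hw ht (v j) fun i hi1 _ => hv ?_
      rw [Fin.le_def]; omega
    rcases le_total z₁ z₂ with hz | hz
    · have k1 : gC v w a b ≤ seg v w a b z₁ := gC_le_seg v w hw a b z₁
      have k2 : gC v w a' b' ≤ seg v w a' b' z₂ := gC_le_seg v w hw a' b' z₂
      have e1 : seg v w a b' z₁ = seg v w a b z₁ + seg v w b b' z₁ :=
        seg_split v w (h1.trans h2) h3 z₁
      have e2 : seg v w a' b' z₂ = seg v w a' b z₂ + seg v w b b' z₂ :=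
        seg_split v w h2 h3 z₂
      have k3 : seg v w b b' z₂ ≤ seg v w b b' z₁ := by
        refine Finset.sum_le_sum fun j _ => ?_
        rcases ind_cases b b' j with h0 | ⟨h1', h2', _⟩
        · rw [h0]; norm_num
        · rw [h1', one_mul, one_mul]
          have hvj := hub j h2'
          have : (v j - z₂) ^ 2 ≤ (v j - z₁) ^ 2 := by nlinarith
          exact mul_le_mul_of_nonneg_left this (hw j).le
      have : gC v w a b' = seg v w a b' z₁ := rfl
      have : gC v w a' b = seg v w a' b z₂ := rfl
      calc gC v w a b + gC v w a' b' ≤ seg v w a b z₁ + seg v w a' b' z₂ := by linarith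
        _ ≤ seg v w a b' z₁ + seg v w a' b z₂ := by linarith
        _ = gC v w a b' + gC v w a' b := rfl
    · have k1 : gC v w a b ≤ seg v w a b z₂ := gC_le_seg v w hw a b z₂
      have k2 : gC v w a' b' ≤ seg v w a' b' z₁ := gC_le_seg v w hw a' b' z₁
      have e1 : seg v w a b z₂ = seg v w a a' z₂ + seg v w a' b z₂ :=
        seg_split v w h1 h2 z₂
      have e2 : seg v w a b' z₁ = seg v w a a' z₁ + seg v w a' b' z₁ :=
        seg_split v w h1 (h2.trans h3) z₁
      have k3 : seg v w a a' z₂ ≤ seg v w a a' z₁ := by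
        refine Finset.sum_le_sum fun j _ => ?_
        rcases ind_cases a a' j with h0 | ⟨h1', _, h3'⟩
        · rw [h0]; norm_num
        · rw [h1', one_mul, one_mul]
          have hvj := hlb j h3'
          have : (v j - z₂) ^ 2 ≤ (v j - z₁) ^ 2 := by nlinarith
          exact mul_le_mul_of_nonneg_left this (hw j).le
      calc gC v w a b + gC v w a' b' ≤ seg v w a b z₂ + seg v w a' b' z₁ := by linarith
        _ ≤ seg v w a' b z₂ + seg v w a b' z₁ := by linarith
        _ = gC v w a b' + gC v w a' b := by rw [gC, gC, ← hz₁, ← hz₂]; ring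

/-- Cost of a path of `K` cut segments. -/
noncomputable def pcost (c : ℕ → ℕ) (K : ℕ) : ℝ :=
  ∑ k ∈ Finset.range K, gC v w (c k) (c (k + 1))

lemma ind_sum_one {K : ℕ} (c : ℕ → ℕ) (hc : Monotone c) (h0 : c 0 = 0) (hK : c K = m)
    (j : Fin m) : ∑ k ∈ Finset.range K, ind m (c k) (c (k + 1)) j = 1 := by
  have key : ∀ k, ind m (c k) (c (k + 1)) j =
      (fun t => if j.val < c t then (1 : ℝ) else 0) (k + 1) -
      (fun t => if j.val < c t then (1 : ℝ) else 0) k := by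
    intro k
    have hmono : c k ≤ c (k + 1) := hc (Nat.le_succ k)
    unfold ind
    simp only
    split_ifs <;> first | ring1 | (exfalso; omega)
  rw [Finset.sum_congr rfl fun k _ => key k,
    Finset.sum_range_sub (fun t => if j.val < c t then (1 : ℝ) else 0)]
  rw [h0, hK]
  have hj : j.val < m := j.isLt
  rw [if_pos hj, if_neg (by omega)]
  ring

end seg

section wk

variable (v w : Fin m → ℝ)

lemma cost_nonneg (hw : ∀ j, 0 < w j) {K : ℕ} (A : Fin m → Fin K) (z : Fin K → ℝ) :
    0 ≤ ∑ j, w j * (v j - z (A j)) ^ 2 :=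
  Finset.sum_nonneg fun j _ => mul_nonneg (hw j).le (sq_nonneg _)

lemma wKMeans_le (hw : ∀ j, 0 < w j) {K : ℕ} (A : Fin m → Fin K) (z : Fin K → ℝ) :
    wKMeans v w K ≤ ∑ j, w j * (v j - z (A j)) ^ 2 := by
  have hb : ∀ B : Fin m → Fin K,
      BddBelow (Set.range fun z : Fin K → ℝ => ∑ j, w j * (v j - z (B j)) ^ 2) := by
    intro B
    refine ⟨0, ?_⟩
    rintro x ⟨z', rfl⟩
    exact cost_nonneg v w hw B z'
  refine le_trans (ciInf_le ?_ A) (ciInf_le (hb A) z)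
  refine ⟨0, ?_⟩
  rintro x ⟨B, rfl⟩
  exact Real.iInf_nonneg fun z' => cost_nonneg v w hw B z'

/-- Step (b): any interval partition into `K` parts gives an upper bound on `W(K)`. -/
lemma wKMeans_le_pcost (hw : ∀ j, 0 < w j) {K : ℕ} (hK : 1 ≤ K) (c : ℕ → ℕ)
    (hc : Monotone c) (h0 : c 0 = 0) (hcm : c K = m) :
    wKMeans v w K ≤ pcost v w c K := by
  have hA : ∀ j : Fin m, ∃ k, k < K ∧ c k ≤ j.val ∧ j.val < c (k + 1) := by
    intro j
    set k := Nat.findGreatest (fun t => c t ≤ j.val) (K - 1) with hk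
    have hP : c k ≤ j.val := by
      have := Nat.findGreatest_spec (P := fun t => c t ≤ j.val) (m := 0) (n := K - 1)
        (Nat.zero_le _) (show c 0 ≤ j.val by rw [h0]; exact Nat.zero_le _)
      exact this
    have hkK : k < K := lt_of_le_of_lt (Nat.findGreatest_le _) (by omega)
    refine ⟨k, hkK, hP, ?_⟩
    by_cases hke : k + 1 ≤ K - 1
    · by_contra hcon
      exact Nat.findGreatest_is_greatest (Nat.lt_succ_self k) hke (not_lt.1 hcon)
    · have : K ≤ k + 1 := by omega
      have : c K ≤ c (k + 1) := hc this
      omega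
  choose kf hkf1 hkf2 hkf3 using hA
  set A : Fin m → Fin K := fun j => ⟨kf j, hkf1 j⟩ with hA
  set z : Fin K → ℝ := fun t => mu v w (c t.val) (c (t.val + 1)) with hz
  refine le_trans (wKMeans_le v w hw A z) ?_
  have hpc : pcost v w c K =
      ∑ j, ∑ k ∈ Finset.range K,
        ind m (c k) (c (k + 1)) j * (w j * (v j - mu v w (c k) (c (k + 1))) ^ 2) := by
    rw [pcost, Finset.sum_comm]
    rfl
  rw [hpc]
  refine Finset.sum_le_sum fun j _ => ?_
  have hsingle : ind m (c (kf j)) (c (kf j + 1)) j *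
      (w j * (v j - mu v w (c (kf j)) (c (kf j + 1))) ^ 2) ≤
      ∑ k ∈ Finset.range K,
        ind m (c k) (c (k + 1)) j * (w j * (v j - mu v w (c k) (c (k + 1))) ^ 2) := by
    refine Finset.single_le_sum
      (f := fun k => ind m (c k) (c (k + 1)) j * (w j * (v j - mu v w (c k) (c (k + 1))) ^ 2))
      (fun i _ => ?_) (Finset.mem_range.2 (hkf1 j))
    exact mul_nonneg (ind_nonneg _ _ _) (mul_nonneg (hw j).le (sq_nonneg _))
  have : ind m (c (kf j)) (c (kf j + 1)) j = 1 := ind_eq_one _ _ j (hkf2 j) (hkf3 j)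
  rw [this, one_mul] at hsingle
  exact hsingle

-- counting function: number of points below threshold `t`
open Classical in
noncomputable def cnt (t : ℝ) : ℕ := (Finset.univ.filter fun i : Fin m => v i < t).card

open Classical in
lemma cnt_le_m (t : ℝ) : cnt v t ≤ m := by
  unfold cnt
  refine le_trans (Finset.card_filter_le _ _) ?_
  simp

open Classical in
lemma cnt_mono {t t' : ℝ} (h : t ≤ t') : cnt v t ≤ cnt v t' := by
  unfold cnt
  apply Finset.card_le_card
  refine Finset.monotone_filter_right _ ?_
  intro i _ hi
  exact lt_of_lt_of_le hi h

open Classical in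
lemma lt_cnt_iff (hv : Monotone v) (t : ℝ) (j : Fin m) : j.val < cnt v t ↔ v j < t := by
  unfold cnt
  constructor
  · intro h
    by_contra hcon
    push_neg at hcon
    have hsub : (Finset.univ.filter fun i : Fin m => v i < t) ⊆ Finset.Iio j := by
      intro i hi
      rw [Finset.mem_filter] at hi
      rw [Finset.mem_Iio]
      by_contra hij
      push_neg at hij
      exact absurd (lt_of_lt_of_le hi.2 (hcon.trans (hv hij))) (lt_irrefl _)
    have hcard := Finset.card_le_card hsub
    rw [Fin.card_Iio] at hcard
    omega
  · intro h
    have hsub : Finset.Iic j ⊆ Finset.univ.filter fun i : Fin m => v i < t := by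
      intro i hi
      rw [Finset.mem_Iic] at hi
      rw [Finset.mem_filter]
      exact ⟨Finset.mem_univ _, lt_of_le_of_lt (hv hi) h⟩
    have hcard := Finset.card_le_card hsub
    rw [Fin.card_Iic] at hcard
    omega

/-- Step (a): any clustering with `K` clusters is lower bounded by some interval partition. -/
lemma pcost_le_cost (hv : Monotone v) (hw : ∀ j, 0 < w j) {K : ℕ} (hK : 1 ≤ K)
    (A : Fin m → Fin K) (z : Fin K → ℝ) :
    ∃ c : ℕ → ℕ, Monotone c ∧ c 0 = 0 ∧ c K = m ∧
      pcost v w c K ≤ ∑ j, w j * (v j - z (A j)) ^ 2 := by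
  -- sorted centers, extended monotonically to ℕ
  set σ := Tuple.sort z with hσ
  set y : ℕ → ℝ := fun k => (z ∘ σ) ⟨min k (K - 1), by omega⟩ with hy
  have hymono : Monotone y := by
    intro k k' hk
    exact Tuple.monotone_sort z (by rw [Fin.le_def]; simp; omega)
  have hyval : ∀ i : Fin K, ∃ k < K, y k = z i := by
    intro i
    refine ⟨(σ.symm i).val, (σ.symm i).isLt, ?_⟩
    have harg : (⟨min (σ.symm i).val (K - 1), by omega⟩ : Fin K) = σ.symm i := by
      apply Fin.ext
      simp only [Fin.val_mk]
      have := (σ.symm i).isLt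
      omega
    show (z ∘ σ) _ = z i
    rw [harg]
    simp
  -- the cuts
  set c : ℕ → ℕ := fun k =>
    if k = 0 then 0 else if K ≤ k then m else cnt v ((y (k - 1) + y k) / 2) with hcdef
  have hc0 : c 0 = 0 := by simp [hcdef]
  have hcK : c K = m := by simp only [hcdef]; rw [if_neg (by omega), if_pos le_rfl]
  have hcm : ∀ k, c k ≤ m := by
    intro k
    simp only [hcdef]
    split_ifs
    · exact Nat.zero_le m
    · exact le_rfl
    · exact cnt_le_m v _
  have hcmono : Monotone c := by
    apply monotone_nat_of_le_succ
    intro k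
    have e1 : c k ≤ m := hcm k
    rcases Nat.eq_zero_or_pos k with hk0 | hkpos
    · rw [hk0, hc0]; exact Nat.zero_le _
    by_cases hkK : K ≤ k + 1
    · have h2 : c (k + 1) = m := by
        simp only [hcdef]; rw [if_neg (by omega), if_pos hkK]
      omega
    · have h1 : c k = cnt v ((y (k - 1) + y k) / 2) := by
        simp only [hcdef]; rw [if_neg (by omega), if_neg (by omega)]
      have h2 : c (k + 1) = cnt v ((y k + y (k + 1)) / 2) := by
        simp only [hcdef]; rw [if_neg (by omega), if_neg (by omega)]; norm_num
      rw [h1, h2]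
      apply cnt_mono
      have l1 : y (k - 1) ≤ y k := hymono (by omega)
      have l2 : y k ≤ y (k + 1) := hymono (by omega)
      linarith
  refine ⟨c, hcmono, hc0, hcK, ?_⟩
  -- key facts about membership in segments
  have hseg_lo : ∀ (k : ℕ) (j : Fin m), 1 ≤ k → k < K → c k ≤ j.val →
      (y (k - 1) + y k) / 2 ≤ v j := by
    intro k j hk1 hk2 hcj
    have hck : c k = cnt v ((y (k - 1) + y k) / 2) := by
      simp only [hcdef]; rw [if_neg (by omega), if_neg (by omega)]
    rw [hck] at hcj
    have hnot := (lt_cnt_iff v hv ((y (k - 1) + y k) / 2) j).not.1 (by omega)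
    linarith [not_lt.1 hnot]
  have hseg_hi : ∀ (k : ℕ) (j : Fin m), k + 1 < K → j.val < c (k + 1) →
      v j < (y k + y (k + 1)) / 2 := by
    intro k j hk2 hcj
    have hck : c (k + 1) = cnt v ((y k + y (k + 1)) / 2) := by
      simp only [hcdef]; rw [if_neg (by omega), if_neg (by omega)]; norm_num
    rw [hck] at hcj
    exact (lt_cnt_iff v hv _ j).1 hcj
  -- nearest-center property
  have hnear : ∀ (k : ℕ) (j : Fin m) (i : Fin K), k < K → c k ≤ j.val → j.val < c (k + 1) →
      (v j - y k) ^ 2 ≤ (v j - z i) ^ 2 := by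
    intro k j i hkK hlo hhi
    obtain ⟨t, htK, hty⟩ := hyval i
    rw [← hty]
    rcases lt_trichotomy k t with hlt | heq | hgt
    · -- t > k, so k + 1 ≤ t < K
      have hk1K : k + 1 < K := by omega
      have hvj := hseg_hi k j hk1K hhi
      have hyy : y (k + 1) ≤ y t := hymono (by omega)
      have hyk : y k ≤ y (k + 1) := hymono (by omega)
      nlinarith
    · rw [heq]
    · -- t < k, so 1 ≤ k
      have hk1 : 1 ≤ k := by omega
      have hvj := hseg_lo k j hk1 hkK hlo
      have hyy : y t ≤ y (k - 1) := hymono (by omega)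
      have hyk : y (k - 1) ≤ y k := hymono (by omega)
      nlinarith
  -- put it together
  have step1 : pcost v w c K ≤ ∑ k ∈ Finset.range K, seg v w (c k) (c (k + 1)) (y k) :=
    Finset.sum_le_sum fun k _ => gC_le_seg v w hw _ _ _
  have step2 : ∑ k ∈ Finset.range K, seg v w (c k) (c (k + 1)) (y k) =
      ∑ j, ∑ k ∈ Finset.range K, ind m (c k) (c (k + 1)) j * (w j * (v j - y k) ^ 2) := by
    rw [Finset.sum_comm]
    rfl
  have step3 : ∀ j : Fin m, ∑ k ∈ Finset.range K, ind m (c k) (c (k + 1)) j *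
      (w j * (v j - y k) ^ 2) ≤ w j * (v j - z (A j)) ^ 2 := by
    intro j
    have hle : ∀ k ∈ Finset.range K, ind m (c k) (c (k + 1)) j * (w j * (v j - y k) ^ 2) ≤
        ind m (c k) (c (k + 1)) j * (w j * (v j - z (A j)) ^ 2) := by
      intro k hk
      rcases ind_cases (c k) (c (k + 1)) j with h0 | ⟨h1, h2, h3⟩
      · rw [h0, zero_mul, zero_mul]
      · rw [h1, one_mul, one_mul]
        exact mul_le_mul_of_nonneg_left
          (hnear k j (A j) (Finset.mem_range.1 hk) h2 h3) (hw j).le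
    refine le_trans (Finset.sum_le_sum hle) ?_
    rw [← Finset.sum_mul, ind_sum_one c hcmono hc0 hcK j, one_mul]
  refine le_trans step1 ?_
  rw [step2]
  exact Finset.sum_le_sum fun j _ => step3 j

/-- The exchange/splicing step: from partitions with `a` and `a+2` parts, build two
partitions with `a+1` parts of no larger total cost. -/
lemma exchange (hv : Monotone v) (hw : ∀ j, 0 < w j) (a : ℕ) (ha : 1 ≤ a)
    (p q : ℕ → ℕ) (hp : Monotone p) (hp0 : p 0 = 0) (hpa : p a = m)
    (hq : Monotone q) (hq0 : q 0 = 0) (hqa : q (a + 2) = m) :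
    ∃ r s : ℕ → ℕ, Monotone r ∧ r 0 = 0 ∧ r (a + 1) = m ∧
      Monotone s ∧ s 0 = 0 ∧ s (a + 1) = m ∧
      pcost v w r (a + 1) + pcost v w s (a + 1) ≤ pcost v w p a + pcost v w q (a + 2) := by
  classical
  -- find the crossing index j
  have hPex : q ((a - 1) + 2) ≤ p ((a - 1) + 1) := by
    have e1 : (a - 1) + 2 ≤ a + 2 := by omega
    have e2 : (a - 1) + 1 = a := by omega
    calc q ((a - 1) + 2) ≤ q (a + 2) := hq e1
      _ = m := hqa
      _ = p a := hpa.symm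
      _ = p ((a - 1) + 1) := by rw [e2]
  have hEx : ∃ n, q (n + 2) ≤ p (n + 1) := ⟨a - 1, hPex⟩
  set j := Nat.find hEx with hjdef
  have hj : q (j + 2) ≤ p (j + 1) := Nat.find_spec hEx
  have hjle : j ≤ a - 1 := Nat.find_min' hEx hPex
  have hL : p j ≤ q (j + 1) := by
    rcases Nat.eq_zero_or_pos j with hj0 | hjpos
    · rw [hj0, hp0]; exact Nat.zero_le _
    · have hnot : ¬ q ((j - 1) + 2) ≤ p ((j - 1) + 1) :=
        Nat.find_min hEx (by omega)
      push_neg at hnot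
      have e1 : (j - 1) + 1 = j := by omega
      have e2 : (j - 1) + 2 = j + 1 := by omega
      rw [e1, e2] at hnot
      exact hnot.le
  -- define the spliced sequences
  set r : ℕ → ℕ := fun k => if k ≤ j then p k else q (k + 1) with hrdef
  set s' : ℕ → ℕ := fun k => if k ≤ j + 1 then q k else p (k - 1) with hsdef
  have hr0 : r 0 = 0 := by simp only [hrdef]; rw [if_pos (Nat.zero_le _)]; exact hp0
  have hra : r (a + 1) = m := by
    simp only [hrdef]; rw [if_neg (by omega)]
    have : a + 1 + 1 = a + 2 := by omega
    rw [this, hqa]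
  have hs0 : s' 0 = 0 := by simp only [hsdef]; rw [if_pos (Nat.zero_le _)]; exact hq0
  have hsa : s' (a + 1) = m := by
    simp only [hsdef]; rw [if_neg (by omega)]
    have : a + 1 - 1 = a := by omega
    rw [this, hpa]
  have hrmono : Monotone r := by
    apply monotone_nat_of_le_succ
    intro k
    simp only [hrdef]
    by_cases h1 : k + 1 ≤ j
    · rw [if_pos (by omega), if_pos h1]; exact hp (by omega)
    · by_cases h2 : k ≤ j
      · rw [if_pos h2, if_neg h1]
        have hkj : k = j := by omega
        rw [hkj]
        exact hL.trans (hq (by omega))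
      · rw [if_neg h2, if_neg h1]; exact hq (by omega)
  have hsmono : Monotone s' := by
    apply monotone_nat_of_le_succ
    intro k
    simp only [hsdef]
    by_cases h1 : k + 1 ≤ j + 1
    · rw [if_pos (by omega), if_pos h1]; exact hq (by omega)
    · by_cases h2 : k ≤ j + 1
      · rw [if_pos h2, if_neg h1]
        have hkj : k = j + 1 := by omega
        rw [hkj]
        have : j + 1 + 1 - 1 = j + 1 := by omega
        rw [this]
        exact (hq (by omega : j + 1 ≤ j + 2)).trans hj
      · rw [if_neg h2, if_neg h1]
        exact hp (by omega)
  refine ⟨r, s', hrmono, hr0, hra, hsmono, hs0, hsa, ?_⟩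
  -- cost computations
  have hja : j + 1 ≤ a := by omega
  -- pcost r
  have hcost_r : pcost v w r (a + 1) =
      (∑ k ∈ Finset.range j, gC v w (p k) (p (k + 1))) + gC v w (p j) (q (j + 2)) +
      ∑ k ∈ Finset.Ico (j + 1) (a + 1), gC v w (q (k + 1)) (q (k + 2)) := by
    rw [pcost, Finset.range_eq_Ico,
      ← Finset.sum_Ico_consecutive _ (Nat.zero_le (j + 1)) (by omega : j + 1 ≤ a + 1),
      Finset.sum_Ico_succ_top (Nat.zero_le j), ← Finset.range_eq_Ico]
    congr 1
    · congr 1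
      · refine Finset.sum_congr rfl fun k hk => ?_
        rw [Finset.mem_range] at hk
        simp only [hrdef]
        rw [if_pos (by omega), if_pos (by omega)]
      · simp only [hrdef]
        rw [if_pos le_rfl, if_neg (by omega)]
    · refine Finset.sum_congr rfl fun k hk => ?_
      rw [Finset.mem_Ico] at hk
      simp only [hrdef]
      rw [if_neg (by omega), if_neg (by omega)]
  -- pcost s'
  have hcost_s : pcost v w s' (a + 1) =
      (∑ k ∈ Finset.range (j + 1), gC v w (q k) (q (k + 1))) + gC v w (q (j + 1)) (p (j + 1)) +
      ∑ k ∈ Finset.Ico (j + 2) (a + 1), gC v w (p (k - 1)) (p k) := by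
    rw [pcost, Finset.range_eq_Ico,
      ← Finset.sum_Ico_consecutive _ (Nat.zero_le (j + 2)) (by omega : j + 2 ≤ a + 1),
      Finset.sum_Ico_succ_top (Nat.zero_le (j + 1)), ← Finset.range_eq_Ico]
    congr 1
    · congr 1
      · refine Finset.sum_congr rfl fun k hk => ?_
        rw [Finset.mem_range] at hk
        simp only [hsdef]
        rw [if_pos (by omega), if_pos (by omega)]
      · simp only [hsdef]
        rw [if_pos le_rfl, if_neg (by omega)]
        have : j + 1 + 1 - 1 = j + 1 := by omega
        rw [this]
    · refine Finset.sum_congr rfl fun k hk => ?_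
      rw [Finset.mem_Ico] at hk
      simp only [hsdef]
      rw [if_neg (by omega), if_neg (by omega)]
      have e : k + 1 - 1 = k := by omega
      rw [e]
  -- pcost p
  have hcost_p : pcost v w p a =
      (∑ k ∈ Finset.range j, gC v w (p k) (p (k + 1))) + gC v w (p j) (p (j + 1)) +
      ∑ k ∈ Finset.Ico (j + 1) a, gC v w (p k) (p (k + 1)) := by
    rw [pcost, Finset.range_eq_Ico,
      ← Finset.sum_Ico_consecutive _ (Nat.zero_le (j + 1)) (by omega : j + 1 ≤ a),
      Finset.sum_Ico_succ_top (Nat.zero_le j), ← Finset.range_eq_Ico]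
  -- pcost q
  have hcost_q : pcost v w q (a + 2) =
      (∑ k ∈ Finset.range (j + 1), gC v w (q k) (q (k + 1))) + gC v w (q (j + 1)) (q (j + 2)) +
      ∑ k ∈ Finset.Ico (j + 2) (a + 2), gC v w (q k) (q (k + 1)) := by
    rw [pcost, Finset.range_eq_Ico,
      ← Finset.sum_Ico_consecutive _ (Nat.zero_le (j + 2)) (by omega : j + 2 ≤ a + 2),
      Finset.sum_Ico_succ_top (Nat.zero_le (j + 1)), ← Finset.range_eq_Ico]
  -- reindexing the two tails
  have htail_q : ∑ k ∈ Finset.Ico (j + 1) (a + 1), gC v w (q (k + 1)) (q (k + 2)) =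
      ∑ k ∈ Finset.Ico (j + 2) (a + 2), gC v w (q k) (q (k + 1)) := by
    rw [Finset.sum_Ico_eq_sum_range, Finset.sum_Ico_eq_sum_range]
    have hlen : a + 1 - (j + 1) = a + 2 - (j + 2) := by omega
    rw [hlen]
    refine Finset.sum_congr rfl fun i _ => ?_
    have e1 : j + 1 + i + 1 = j + 2 + i := by omega
    have e2 : j + 1 + i + 2 = j + 2 + i + 1 := by omega
    rw [e1, e2]
  have htail_p : ∑ k ∈ Finset.Ico (j + 2) (a + 1), gC v w (p (k - 1)) (p k) =
      ∑ k ∈ Finset.Ico (j + 1) a, gC v w (p k) (p (k + 1)) := by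
    rw [Finset.sum_Ico_eq_sum_range, Finset.sum_Ico_eq_sum_range]
    have hlen : a + 1 - (j + 2) = a - (j + 1) := by omega
    rw [hlen]
    refine Finset.sum_congr rfl fun i _ => ?_
    have e1 : j + 2 + i - 1 = j + 1 + i := by omega
    have e2 : j + 2 + i = j + 1 + i + 1 := by omega
    rw [e1, e2]
  -- the quadrangle inequality at the crossing
  have hqi : gC v w (p j) (q (j + 2)) + gC v w (q (j + 1)) (p (j + 1)) ≤
      gC v w (p j) (p (j + 1)) + gC v w (q (j + 1)) (q (j + 2)) :=
    qi v w hv hw hL (hq (by omega : j + 1 ≤ j + 2)) hj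
  rw [hcost_r, hcost_s, hcost_p, hcost_q, htail_q, htail_p]
  linarith

/-- `wKMeans` is invariant under permuting the points (with their weights). -/
lemma wKMeans_perm (e : Equiv.Perm (Fin m)) (C : ℕ) :
    wKMeans (v ∘ e) (w ∘ e) C = wKMeans v w C := by
  unfold wKMeans
  have h1 : ∀ (A : Fin m → Fin C) (z : Fin C → ℝ),
      ∑ j, (w ∘ e) j * ((v ∘ e) j - z (A j)) ^ 2 =
      ∑ j, w j * (v j - z ((A ∘ ⇑e.symm) j)) ^ 2 := by
    intro A z
    rw [← Equiv.sum_comp e (fun j => w j * (v j - z ((A ∘ ⇑e.symm) j)) ^ 2)]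
    exact Finset.sum_congr rfl fun j _ => by simp
  have h2 : (⨅ (A : Fin m → Fin C) (z : Fin C → ℝ),
        ∑ j, (w ∘ e) j * ((v ∘ e) j - z (A j)) ^ 2) =
      ⨅ (A : Fin m → Fin C),
        (fun B : Fin m → Fin C => ⨅ z : Fin C → ℝ, ∑ j, w j * (v j - z (B j)) ^ 2)
          (A ∘ ⇑e.symm) :=
    iInf_congr fun A => iInf_congr fun z => h1 A z
  rw [h2]
  have hsur : Function.Surjective
      (fun A : Fin m → Fin C => A ∘ ⇑e.symm) := by
    intro B
    exact ⟨B ∘ ⇑e, by funext j; simp⟩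
  show sInf _ = sInf _
  congr 1
  exact hsur.range_comp
    (g := fun B : Fin m → Fin C => ⨅ z : Fin C → ℝ, ∑ j, w j * (v j - z (B j)) ^ 2)

/-- Main inequality in the sorted case. -/
lemma main_mono (hv : Monotone v) (hw : ∀ j, 0 < w j) (a : ℕ) (ha : 1 ≤ a) :
    2 * wKMeans v w (a + 1) ≤ wKMeans v w a + wKMeans v w (a + 2) := by
  have key : ∀ (A₁ : Fin m → Fin a) (z₁ : Fin a → ℝ)
      (A₂ : Fin m → Fin (a + 2)) (z₂ : Fin (a + 2) → ℝ),
      2 * wKMeans v w (a + 1) ≤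
        (∑ j, w j * (v j - z₁ (A₁ j)) ^ 2) + ∑ j, w j * (v j - z₂ (A₂ j)) ^ 2 := by
    intro A₁ z₁ A₂ z₂
    obtain ⟨p, hpm, hp0, hpa, hpc⟩ := pcost_le_cost v w hv hw ha A₁ z₁
    obtain ⟨q, hqm, hq0, hqa, hqc⟩ :=
      pcost_le_cost v w hv hw (by omega : 1 ≤ a + 2) A₂ z₂
    obtain ⟨r, s', hrm, hr0, hra, hsm, hs0, hsa, hcost⟩ :=
      exchange v w hv hw a ha p q hpm hp0 hpa hqm hq0 hqa
    have h1 := wKMeans_le_pcost v w hw (by omega : 1 ≤ a + 1) r hrm hr0 hra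
    have h2 := wKMeans_le_pcost v w hw (by omega : 1 ≤ a + 1) s' hsm hs0 hsa
    linarith
  haveI : Nonempty (Fin a) := ⟨⟨0, ha⟩⟩
  unfold wKMeans
  exact le_ciInf_add_ciInf fun A₁ A₂ =>
    le_ciInf_add_ciInf fun z₁ z₂ => key A₁ z₁ A₂ z₂

end wk

end WKMaux

/-- **Convexity of the weighted k-means objective in the number of clusters:**
for `C ≥ 2`, `W(C−1) + W(C+1) ≥ 2·W(C)`. -/
theorem weighted_kmeans_convex_in_clusters
    {m : ℕ} (hm : 1 ≤ m) (v w : Fin m → ℝ) (hw : ∀ j, 0 < w j)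
    (C : ℕ) (hC : 2 ≤ C) :
    2 * wKMeans v w C ≤ wKMeans v w (C - 1) + wKMeans v w (C + 1) := by
  obtain ⟨b, rfl⟩ : ∃ b, C = b + 2 := ⟨C - 2, by omega⟩
  have h1 : b + 2 - 1 = b + 1 := by omega
  rw [h1]
  set σ := Tuple.sort v with hσ
  have hv' : Monotone (v ∘ σ) := Tuple.monotone_sort v
  have hw' : ∀ j, 0 < (w ∘ σ) j := fun j => hw _
  rw [← WKMaux.wKMeans_perm v w σ (b + 1), ← WKMaux.wKMeans_perm v w σ (b + 2),
    ← WKMaux.wKMeans_perm v w σ (b + 2 + 1)]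
  exact WKMaux.main_mono (v ∘ σ) (w ∘ σ) hv' hw' (b + 1) (by omega)
end

section
/- Let m ≥ 1, let v : Fin m → ℝ be points and w : Fin m → ℝ weights with w j > 0 for all j, let W(C) denote the weighted k-means objective with C clusters, and let λ ≥ 0. If for some integer C ≥ 1 we have W(C) − W(C+1) ≤ λ, then for every integer C' ≥ C, W(C) + λ·C ≤ W(C') + λ·C'. (Early-stopping correctness: once the loss improvement from adding one cluster drops below the regularization λ, the regularized objective W(C) + λ·C cannot be improved by any larger number of clusters; this justifies the termination rule of the lower-bound computation in Algorithm 1.) -/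
open Finset

namespace KMAux

variable {m : ℕ} (v w : Fin m → ℝ)

/-- cost of a finite set of points with a fixed center `z`. -/
def setCostZ (S : Finset (Fin m)) (z : ℝ) : ℝ := ∑ j ∈ S, w j * (v j - z) ^ 2

/-- the points with index in `[a, b)`. -/
def seg (a b : ℕ) : Finset (Fin m) := univ.filter (fun j => a ≤ (j : ℕ) ∧ (j : ℕ) < b)

/-- optimal single-cluster cost of the points with index in `[a,b)`. -/
noncomputable def segCost (a b : ℕ) : ℝ := ⨅ z : ℝ, setCostZ v w (seg a b) z

variable {v w}

lemma setCostZ_nonneg (hw : ∀ j, 0 < w j) (S : Finset (Fin m)) (z : ℝ) :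
    0 ≤ setCostZ v w S z :=
  Finset.sum_nonneg fun j _ => mul_nonneg (hw j).le (sq_nonneg _)

lemma setCostZ_bdd (hw : ∀ j, 0 < w j) (S : Finset (Fin m)) :
    BddBelow (Set.range (setCostZ v w S)) :=
  ⟨0, by rintro x ⟨z, rfl⟩; exact setCostZ_nonneg hw S z⟩

lemma segCost_le (hw : ∀ j, 0 < w j) (a b : ℕ) (z : ℝ) :
    segCost v w a b ≤ setCostZ v w (seg a b) z :=
  ciInf_le (setCostZ_bdd hw _) z

lemma segCost_nonneg (hw : ∀ j, 0 < w j) (a b : ℕ) : 0 ≤ segCost v w a b :=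
  Real.iInf_nonneg (setCostZ_nonneg hw _)

lemma seg_union {a c b : ℕ} (h1 : a ≤ c) (h2 : c ≤ b) :
    seg (m := m) a b = seg a c ∪ seg c b := by
  ext j; simp only [seg, mem_filter, mem_union, mem_univ, true_and]; omega

lemma seg_disjoint (a c b : ℕ) : Disjoint (seg (m := m) a c) (seg c b) := by
  rw [Finset.disjoint_left]
  intro j hj hj'
  simp only [seg, mem_filter, mem_univ, true_and] at hj hj'
  omega

lemma setCostZ_split {a c b : ℕ} (h1 : a ≤ c) (h2 : c ≤ b) (z : ℝ) :
    setCostZ v w (seg a b) z = setCostZ v w (seg a c) z + setCostZ v w (seg c b) z := by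
  rw [setCostZ, seg_union h1 h2, Finset.sum_union (seg_disjoint a c b)]; rfl

/-- the weighted mean of the points in `[a,b)`. -/
noncomputable def mu (a b : ℕ) : ℝ :=
  (∑ j ∈ seg (m := m) a b, w j * v j) / (∑ j ∈ seg (m := m) a b, w j)

lemma wsum_pos (hw : ∀ j, 0 < w j) {a b : ℕ} (h : (seg (m := m) a b).Nonempty) :
    0 < ∑ j ∈ seg (m := m) a b, w j :=
  Finset.sum_pos (fun j _ => hw j) h

lemma setCostZ_quadratic (a b : ℕ) (z : ℝ) :
    setCostZ v w (seg a b) z =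
      (∑ j ∈ seg (m := m) a b, w j * v j ^ 2)
        - 2 * z * (∑ j ∈ seg (m := m) a b, w j * v j)
        + z ^ 2 * (∑ j ∈ seg (m := m) a b, w j) := by
  rw [setCostZ, Finset.mul_sum, Finset.mul_sum, ← Finset.sum_sub_distrib, ← Finset.sum_add_distrib]
  exact Finset.sum_congr rfl fun j _ => by ring

lemma segCost_attained (hw : ∀ j, 0 < w j) {a b : ℕ} (h : (seg (m := m) a b).Nonempty) :
    segCost v w a b = setCostZ v w (seg a b) (mu (v := v) (w := w) a b) := by
  refine le_antisymm (segCost_le hw a b _) (le_ciInf fun z => ?_)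
  have hW := wsum_pos hw h
  rw [setCostZ_quadratic, setCostZ_quadratic]
  set Wt := ∑ j ∈ seg (m := m) a b, w j
  set Mv := ∑ j ∈ seg (m := m) a b, w j * v j
  have hmu : mu (v := v) (w := w) a b * Wt = Mv := by
    rw [mu]; exact div_mul_cancel₀ _ hW.ne'
  rw [← hmu]
  nlinarith [mul_nonneg hW.le (sq_nonneg (z - mu (v := v) (w := w) a b))]

lemma mu_le (hw : ∀ j, 0 < w j) {a b : ℕ} (h : (seg (m := m) a b).Nonempty) {r : ℝ}
    (hr : ∀ j ∈ seg (m := m) a b, v j ≤ r) : mu (v := v) (w := w) a b ≤ r := by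
  have hW := wsum_pos hw h
  rw [mu, div_le_iff₀ hW]
  calc ∑ j ∈ seg (m := m) a b, w j * v j ≤ ∑ j ∈ seg (m := m) a b, w j * r :=
        Finset.sum_le_sum fun j hj => mul_le_mul_of_nonneg_left (hr j hj) (hw j).le
    _ = r * ∑ j ∈ seg (m := m) a b, w j := by rw [← Finset.sum_mul]; ring
    _ = _ := by ring

lemma le_mu (hw : ∀ j, 0 < w j) {a b : ℕ} (h : (seg (m := m) a b).Nonempty) {r : ℝ}
    (hr : ∀ j ∈ seg (m := m) a b, r ≤ v j) : r ≤ mu (v := v) (w := w) a b := by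
  have hW := wsum_pos hw h
  rw [mu, le_div_iff₀ hW]
  calc r * ∑ j ∈ seg (m := m) a b, w j = ∑ j ∈ seg (m := m) a b, w j * r := by
        rw [← Finset.sum_mul]; ring
    _ ≤ ∑ j ∈ seg (m := m) a b, w j * v j :=
        Finset.sum_le_sum fun j hj => mul_le_mul_of_nonneg_left (hr j hj) (hw j).le

lemma setCostZ_mono_center (S : Finset (Fin m)) (hw : ∀ j, 0 < w j) {p q : ℝ}
    (hcmp : ∀ j ∈ S, (v j - q) ^ 2 ≤ (v j - p) ^ 2) :
    setCostZ v w S q ≤ setCostZ v w S p :=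
  Finset.sum_le_sum fun j hj => mul_le_mul_of_nonneg_left (hcmp j hj) (hw j).le

lemma segCost_empty {a b : ℕ} (h : seg (m := m) a b = ∅) : segCost v w a b = 0 := by
  rw [segCost]
  simp only [setCostZ, h, Finset.sum_empty]
  exact ciInf_const

lemma seg_subset {a a' b b' : ℕ} (h1 : a ≤ a') (h2 : b' ≤ b) :
    seg (m := m) a' b' ⊆ seg a b := by
  intro j hj
  simp only [seg, mem_filter, mem_univ, true_and] at hj ⊢
  omega

/-- pointwise (single common center) version of the quadrangle identity -/
lemma setCostZ_quadrangle {a a' b b' : ℕ} (h1 : a ≤ a') (h2 : a' ≤ b) (h3 : b ≤ b') (z : ℝ) :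
    setCostZ v w (seg a b) z + setCostZ v w (seg a' b') z
      = setCostZ v w (seg a b') z + setCostZ v w (seg a' b) z := by
  rw [setCostZ_split (v := v) (w := w) h1 h2 z,
      setCostZ_split (v := v) (w := w) h2 h3 z,
      setCostZ_split (v := v) (w := w) h1 (h2.trans h3) z,
      setCostZ_split (v := v) (w := w) h2 h3 z]
  ring

/-- The concave quadrangle inequality for interval cluster costs. -/
lemma segCost_QI (hw : ∀ j, 0 < w j) (hv : Monotone v) {a a' b b' : ℕ}
    (h1 : a ≤ a') (h2 : a' ≤ b) (h3 : b ≤ b') :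
    segCost v w a b + segCost v w a' b' ≤ segCost v w a b' + segCost v w a' b := by
  by_cases hY : (seg (m := m) a' b).Nonempty
  · -- main case
    set q := mu (v := v) (w := w) a' b with hqdef
    have hq : segCost v w a' b = setCostZ v w (seg a' b) q := segCost_attained hw hY
    have hb' : (seg (m := m) a b').Nonempty := by
      obtain ⟨y, hy⟩ := hY
      exact ⟨y, seg_subset h1 h3 hy⟩
    set p := mu (v := v) (w := w) a b' with hpdef
    have hp : segCost v w a b' = setCostZ v w (seg a b') p := segCost_attained hw hb'
    have hqZ : ∀ j ∈ seg (m := m) b b', q ≤ v j := by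
      intro j hj
      simp only [seg, mem_filter, mem_univ, true_and] at hj
      refine mu_le hw hY ?_
      intro y hy
      simp only [seg, mem_filter, mem_univ, true_and] at hy
      exact hv (by omega : y ≤ j)
    have hqX : ∀ j ∈ seg (m := m) a a', v j ≤ q := by
      intro j hj
      simp only [seg, mem_filter, mem_univ, true_and] at hj
      refine le_mu hw hY ?_
      intro y hy
      simp only [seg, mem_filter, mem_univ, true_and] at hy
      exact hv (by omega : j ≤ y)
    rcases le_total p q with hpq | hqp
    · have hZ : setCostZ v w (seg b b') q ≤ setCostZ v w (seg b b') p := by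
        refine setCostZ_mono_center _ hw fun j hj => ?_
        have := hqZ j hj; nlinarith
      have e1 : segCost v w a b ≤ setCostZ v w (seg a b) p := segCost_le hw a b p
      have e2 : segCost v w a' b' ≤ setCostZ v w (seg a' b') q := segCost_le hw a' b' q
      have d1 := setCostZ_split (v := v) (w := w) h2 h3 q   -- a' b' at b
      have d2 := setCostZ_split (v := v) (w := w) h2 h3 p
      have d3 := setCostZ_quadrangle (v := v) (w := w) h1 h2 h3 p
      rw [hp, hq]
      linarith
    · have hX : setCostZ v w (seg a a') q ≤ setCostZ v w (seg a a') p := by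
        refine setCostZ_mono_center _ hw fun j hj => ?_
        have := hqX j hj; nlinarith
      have e1 : segCost v w a b ≤ setCostZ v w (seg a b) q := segCost_le hw a b q
      have e2 : segCost v w a' b' ≤ setCostZ v w (seg a' b') p := segCost_le hw a' b' p
      have d1 : setCostZ v w (seg a b) q
          = setCostZ v w (seg a a') q + setCostZ v w (seg a' b) q :=
        setCostZ_split (v := v) (w := w) h1 h2 q
      have d2 := setCostZ_split (v := v) (w := w) h1 h2 p   -- a b at a'
      have d3 : setCostZ v w (seg a b') p
          = setCostZ v w (seg a b) p + setCostZ v w (seg b b') p :=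
        setCostZ_split (v := v) (w := w) (h1.trans h2) h3 p
      have d4 : setCostZ v w (seg a' b') p
          = setCostZ v w (seg a' b) p + setCostZ v w (seg b b') p :=
        setCostZ_split (v := v) (w := w) h2 h3 p
      rw [hp, hq]
      linarith
  · -- Y empty
    have hYe : seg (m := m) a' b = ∅ := not_nonempty_iff_eq_empty.mp hY
    have hY0 : segCost v w a' b = 0 := segCost_empty hYe
    have hYz : ∀ z, setCostZ v w (seg (m := m) a' b) z = 0 := by
      intro z; rw [setCostZ, hYe, Finset.sum_empty]
    by_cases hab' : (seg (m := m) a b').Nonempty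
    · set p := mu (v := v) (w := w) a b' with hpdef
      have hp : segCost v w a b' = setCostZ v w (seg a b') p := segCost_attained hw hab'
      have e1 : segCost v w a b ≤ setCostZ v w (seg a b) p := segCost_le hw a b p
      have e2 : segCost v w a' b' ≤ setCostZ v w (seg a' b') p := segCost_le hw a' b' p
      have d3 := setCostZ_quadrangle (v := v) (w := w) h1 h2 h3 p
      have := hYz p
      rw [hp, hY0]
      linarith
    · have hab'e : seg (m := m) a b' = ∅ := not_nonempty_iff_eq_empty.mp hab'
      have h0 : segCost v w a b = 0 :=
        segCost_empty (Finset.subset_empty.mp (hab'e ▸ seg_subset le_rfl h3))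
      have h0' : segCost v w a' b' = 0 :=
        segCost_empty (Finset.subset_empty.mp (hab'e ▸ seg_subset h1 le_rfl))
      have h0'' : segCost v w a b' = 0 := segCost_empty hab'e
      rw [h0, h0', h0'', hY0]


/-- boundary descriptions of partitions of `Fin m` into `k` intervals -/
def Bdry (m k : ℕ) : Type := {b : ℕ → ℕ // Monotone b ∧ b 0 = 0 ∧ b k = m}

lemma bdry_nonempty (m : ℕ) {k : ℕ} (hk : 1 ≤ k) : Nonempty (Bdry m k) := by
  refine ⟨⟨fun i => if i = 0 then 0 else m, ?_, by simp, ?_⟩⟩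
  · intro x y hxy
    by_cases hx : x = 0 <;> by_cases hy : y = 0 <;> simp [hx, hy] <;> omega
  · have : k ≠ 0 := by omega
    simp [this]

variable (v w) in
/-- total cost of the interval partition with boundaries `b` -/
noncomputable def pcost (k : ℕ) (b : ℕ → ℕ) : ℝ :=
  ∑ i ∈ Finset.range k, segCost v w (b i) (b (i + 1))

variable (v w) in
noncomputable def fKM (k : ℕ) : ℝ := ⨅ b : Bdry m k, pcost v w k b.1

lemma pcost_nonneg (hw : ∀ j, 0 < w j) (k : ℕ) (b : ℕ → ℕ) : 0 ≤ pcost v w k b :=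
  Finset.sum_nonneg fun i _ => segCost_nonneg hw _ _

lemma fKM_le (hw : ∀ j, 0 < w j) {k : ℕ} (b : Bdry m k) : fKM v w k ≤ pcost v w k b.1 :=
  ciInf_le ⟨0, by rintro x ⟨c, rfl⟩; exact pcost_nonneg hw _ _⟩ b

lemma sum_Ico_shift (g : ℕ → ℝ) (a n : ℕ) :
    ∑ j ∈ Finset.Ico a n, g (j + 1) = ∑ j ∈ Finset.Ico (a + 1) (n + 1), g j := by
  rw [Finset.sum_Ico_eq_sum_range, Finset.sum_Ico_eq_sum_range]
  have hn : n + 1 - (a + 1) = n - a := by omega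
  rw [hn]
  exact Finset.sum_congr rfl fun t _ => by rw [show a + t + 1 = a + 1 + t from by omega]

lemma pcost_split (k i : ℕ) (hik : i < k) (b : ℕ → ℕ) :
    pcost v w k b = (∑ j ∈ Finset.Ico 0 i, segCost v w (b j) (b (j + 1)))
      + segCost v w (b i) (b (i + 1))
      + ∑ j ∈ Finset.Ico (i + 1) k, segCost v w (b j) (b (j + 1)) := by
  rw [pcost, Finset.range_eq_Ico,
    ← Finset.sum_Ico_consecutive _ (Nat.zero_le i) (by omega : i ≤ k),
    ← Finset.sum_Ico_consecutive _ (by omega : i ≤ i + 1) (by omega : i + 1 ≤ k)]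
  have : Finset.Ico i (i + 1) = {i} := by
    rw [Finset.Ico_add_one_right_eq_Icc, Finset.Icc_self]
  rw [this, Finset.sum_singleton]
  ring

/-- the key splicing step: two interval partitions with `k` and `k+2` parts can be
recombined into two partitions with `k+1` parts without increasing total cost. -/
lemma splice (hw : ∀ j, 0 < w j) (hv : Monotone v) {k : ℕ} (hk : 1 ≤ k)
    (B : Bdry m k) (D : Bdry m (k + 2)) :
    fKM v w (k + 1) + fKM v w (k + 1) ≤ pcost v w k B.1 + pcost v w (k + 2) D.1 := by
  obtain ⟨b, hbmono, hb0, hbk⟩ := B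
  obtain ⟨d, hdmono, hd0, hdk⟩ := D
  classical
  set P : ℕ → Prop := fun i => b i ≤ d (i + 1) with hP
  have hP0 : P 0 := by simp [hP, hb0]
  set i := Nat.findGreatest P (k - 1) with hidef
  have hPi : P i := Nat.findGreatest_spec (Nat.zero_le _) hP0
  have hik : i ≤ k - 1 := Nat.findGreatest_le _
  have hnext : d (i + 2) ≤ b (i + 1) := by
    rcases eq_or_lt_of_le hik with he | hlt
    · have h1 : i + 1 = k := by omega
      have : d (i + 2) ≤ d (k + 2) := hdmono (by omega)
      rw [hdk] at this
      rw [h1, hbk]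
      exact this
    · have hng := Nat.findGreatest_is_greatest (by omega : Nat.findGreatest P (k-1) < i + 1)
        (by omega : i + 1 ≤ k - 1)
      simp only [hP, not_le] at hng
      have harr : d (i + 1 + 1) = d (i + 2) := congrArg d (by omega)
      omega
  have hord : b i ≤ d (i + 1) ∧ d (i + 1) ≤ d (i + 2) ∧ d (i + 2) ≤ b (i + 1) :=
    ⟨hPi, hdmono (by omega), hnext⟩
  -- the two spliced partitions
  set e : ℕ → ℕ := fun j => if j ≤ i then b j else d (j + 1) with hedef
  set f : ℕ → ℕ := fun j => if j ≤ i + 1 then d j else b (j - 1) with hfdef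
  have hemono : Monotone e := by
    intro x y hxy
    simp only [hedef]
    by_cases hx : x ≤ i <;> by_cases hy : y ≤ i <;> simp [hx, hy]
    · exact hbmono hxy
    · exact le_trans (hbmono hx) (le_trans hord.1 (hdmono (by omega)))
    · omega
    · exact hdmono (by omega)
  have hfmono : Monotone f := by
    intro x y hxy
    simp only [hfdef]
    by_cases hx : x ≤ i + 1 <;> by_cases hy : y ≤ i + 1 <;> simp [hx, hy]
    · exact hdmono hxy
    · exact le_trans (hdmono hx) (le_trans (hdmono (by omega))
        (le_trans hord.2.2 (hbmono (by omega))))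
    · omega
    · exact hbmono (by omega)
  have he0 : e 0 = 0 := by simp [hedef, hb0]
  have hetop : e (k + 1) = m := by
    simp only [hedef]
    rw [if_neg (by omega)]
    rw [congrArg d (by omega : k + 1 + 1 = k + 2)]
    exact hdk
  have hf0 : f 0 = 0 := by simp [hfdef, hd0]
  have hftop : f (k + 1) = m := by
    simp only [hfdef]
    rw [if_neg (by omega)]
    rw [congrArg b (by omega : k + 1 - 1 = k)]
    exact hbk
  have hce : pcost v w (k + 1) e
      = (∑ j ∈ Finset.Ico 0 i, segCost v w (b j) (b (j + 1)))
        + segCost v w (b i) (d (i + 1 + 1))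
        + ∑ j ∈ Finset.Ico (i + 1) (k + 1), segCost v w (d (j + 1)) (d (j + 1 + 1)) := by
    rw [pcost_split (v := v) (w := w) (k + 1) i (by omega) e]
    have h1 : ∑ j ∈ Finset.Ico 0 i, segCost v w (e j) (e (j + 1))
        = ∑ j ∈ Finset.Ico 0 i, segCost v w (b j) (b (j + 1)) := by
      refine Finset.sum_congr rfl fun j hj => ?_
      simp only [Finset.mem_Ico] at hj
      simp only [hedef]
      rw [if_pos (by omega), if_pos (by omega)]
    have h2 : e i = b i := by simp [hedef]
    have h3 : e (i + 1) = d (i + 1 + 1) := by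
      simp only [hedef]; rw [if_neg (by omega)]
    have h4 : ∑ j ∈ Finset.Ico (i + 1) (k + 1), segCost v w (e j) (e (j + 1))
        = ∑ j ∈ Finset.Ico (i + 1) (k + 1), segCost v w (d (j + 1)) (d (j + 1 + 1)) := by
      refine Finset.sum_congr rfl fun j hj => ?_
      simp only [Finset.mem_Ico] at hj
      simp only [hedef]
      rw [if_neg (by omega), if_neg (by omega)]
    rw [h1, h2, h3, h4]
  have hcf : pcost v w (k + 1) f
      = (∑ j ∈ Finset.Ico 0 (i + 1), segCost v w (d j) (d (j + 1)))
        + segCost v w (d (i + 1)) (b (i + 1 + 1 - 1))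
        + ∑ j ∈ Finset.Ico (i + 2) (k + 1), segCost v w (b (j - 1)) (b (j + 1 - 1)) := by
    rw [pcost_split (v := v) (w := w) (k + 1) (i + 1) (by omega) f]
    have h1 : ∑ j ∈ Finset.Ico 0 (i + 1), segCost v w (f j) (f (j + 1))
        = ∑ j ∈ Finset.Ico 0 (i + 1), segCost v w (d j) (d (j + 1)) := by
      refine Finset.sum_congr rfl fun j hj => ?_
      simp only [Finset.mem_Ico] at hj
      simp only [hfdef]
      rw [if_pos (by omega), if_pos (by omega)]
    have h2 : f (i + 1) = d (i + 1) := by simp [hfdef]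
    have h3 : f (i + 1 + 1) = b (i + 1 + 1 - 1) := by
      simp only [hfdef]; rw [if_neg (by omega)]
    have h4 : ∑ j ∈ Finset.Ico (i + 2) (k + 1), segCost v w (f j) (f (j + 1))
        = ∑ j ∈ Finset.Ico (i + 2) (k + 1), segCost v w (b (j - 1)) (b (j + 1 - 1)) := by
      refine Finset.sum_congr rfl fun j hj => ?_
      simp only [Finset.mem_Ico] at hj
      simp only [hfdef]
      rw [if_neg (by omega), if_neg (by omega)]
    rw [h1, h2, h3, h4]
  have hcb : pcost v w k b
      = (∑ j ∈ Finset.Ico 0 i, segCost v w (b j) (b (j + 1)))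
        + segCost v w (b i) (b (i + 1))
        + ∑ j ∈ Finset.Ico (i + 1) k, segCost v w (b j) (b (j + 1)) :=
    pcost_split (v := v) (w := w) k i (by omega) b
  have hcd : pcost v w (k + 2) d
      = (∑ j ∈ Finset.Ico 0 (i + 1), segCost v w (d j) (d (j + 1)))
        + segCost v w (d (i + 1)) (d (i + 1 + 1))
        + ∑ j ∈ Finset.Ico (i + 2) (k + 2), segCost v w (d j) (d (j + 1)) :=
    pcost_split (v := v) (w := w) (k + 2) (i + 1) (by omega) d
  have htaild : ∑ j ∈ Finset.Ico (i + 1) (k + 1), segCost v w (d (j + 1)) (d (j + 1 + 1))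
      = ∑ j ∈ Finset.Ico (i + 2) (k + 2), segCost v w (d j) (d (j + 1)) :=
    sum_Ico_shift (fun j => segCost v w (d j) (d (j + 1))) (i + 1) (k + 1)
  have htailb : ∑ j ∈ Finset.Ico (i + 2) (k + 1), segCost v w (b (j - 1)) (b (j + 1 - 1))
      = ∑ j ∈ Finset.Ico (i + 1) k, segCost v w (b j) (b (j + 1)) := by
    rw [← sum_Ico_shift (fun j => segCost v w (b (j - 1)) (b (j + 1 - 1))) (i + 1) k]
    refine Finset.sum_congr rfl fun j hj => ?_
    rw [congrArg b (by omega : j + 1 - 1 = j), congrArg b (by omega : j + 1 + 1 - 1 = j + 1)]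
  have harr2 : d (i + 1 + 1) = d (i + 2) := congrArg d (by omega)
  have harr3 : b (i + 1 + 1 - 1) = b (i + 1) := congrArg b (by omega)
  have hQI := segCost_QI hw hv hord.1 hord.2.1 hord.2.2
  have hEe : fKM v w (k + 1) ≤ pcost v w (k + 1) e := fKM_le hw ⟨e, hemono, he0, hetop⟩
  have hEf : fKM v w (k + 1) ≤ pcost v w (k + 1) f := fKM_le hw ⟨f, hfmono, hf0, hftop⟩
  rw [harr2] at hce hcd
  rw [harr3] at hcf
  rw [htaild] at hce
  rw [htailb] at hcf
  linarith

lemma fKM_convex (hw : ∀ j, 0 < w j) (hv : Monotone v) {k : ℕ} (hk : 1 ≤ k) :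
    fKM v w (k + 1) + fKM v w (k + 1) ≤ fKM v w k + fKM v w (k + 2) := by
  haveI : Nonempty (Bdry m k) := bdry_nonempty m hk
  haveI : Nonempty (Bdry m (k + 2)) := bdry_nonempty m (by omega)
  have step1 : ∀ B : Bdry m k,
      fKM v w (k + 1) + fKM v w (k + 1) - fKM v w (k + 2) ≤ pcost v w k B.1 := by
    intro B
    have h2 : fKM v w (k + 1) + fKM v w (k + 1) - pcost v w k B.1 ≤ fKM v w (k + 2) :=
      le_ciInf fun D => by linarith [splice hw hv hk B D]
    linarith
  have h4 : fKM v w (k + 1) + fKM v w (k + 1) - fKM v w (k + 2) ≤ fKM v w k :=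
    le_ciInf step1
  linarith

variable (v w) in
/-- the k-means objective of an explicit clustering -/
def obj (k : ℕ) (A : Fin m → Fin k) (z : Fin k → ℝ) : ℝ := ∑ j, w j * (v j - z (A j)) ^ 2

lemma obj_nonneg (hw : ∀ j, 0 < w j) {k : ℕ} (A : Fin m → Fin k) (z : Fin k → ℝ) :
    0 ≤ obj v w k A z :=
  Finset.sum_nonneg fun j _ => mul_nonneg (hw j).le (sq_nonneg _)

lemma wKMeans_eq (k : ℕ) :
    wKMeans v w k = ⨅ (A : Fin m → Fin k), ⨅ z : Fin k → ℝ, obj v w k A z := rfl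

lemma wKMeans_le_obj (hw : ∀ j, 0 < w j) {k : ℕ} (A : Fin m → Fin k) (z : Fin k → ℝ) :
    wKMeans v w k ≤ obj v w k A z := by
  rw [wKMeans_eq]
  refine le_trans (ciInf_le ⟨0, ?_⟩ A) (ciInf_le ⟨0, ?_⟩ z)
  · rintro x ⟨A', rfl⟩
    exact Real.iInf_nonneg fun z' => obj_nonneg hw A' z'
  · rintro x ⟨z', rfl⟩
    exact obj_nonneg hw A z'

lemma wKMeans_le_fKM (hw : ∀ j, 0 < w j) {k : ℕ} (hk : 1 ≤ k) :
    wKMeans v w k ≤ fKM v w k := by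
  haveI : Nonempty (Bdry m k) := bdry_nonempty m hk
  refine le_ciInf fun B => ?_
  obtain ⟨b, hbmono, hb0, hbk⟩ := B
  refine le_of_forall_pos_le_add fun ε hε => ?_
  have hk0 : (0 : ℝ) < (k : ℝ) := by exact_mod_cast hk
  have hεk : 0 < ε / k := div_pos hε hk0
  have hch : ∀ i : Fin k, ∃ zz : ℝ,
      setCostZ v w (seg (b i) (b ((i : ℕ) + 1))) zz
        < segCost v w (b i) (b ((i : ℕ) + 1)) + ε / k := by
    intro i
    have hlt : segCost v w (b i) (b ((i : ℕ) + 1))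
        < segCost v w (b i) (b ((i : ℕ) + 1)) + ε / k := by linarith
    exact exists_lt_of_ciInf_lt
      (show (⨅ z : ℝ, setCostZ v w (seg (b i) (b ((i : ℕ) + 1))) z) < _ from hlt)
  choose ζ hζ using hch
  have hAheadlt : ∀ j : Fin m, Nat.findGreatest (fun i => b i ≤ (j : ℕ)) (k - 1) < k :=
    fun j => lt_of_le_of_lt (Nat.findGreatest_le _) (by omega)
  set A : Fin m → Fin k :=
    (fun j => ⟨Nat.findGreatest (fun i => b i ≤ (j : ℕ)) (k - 1), hAheadlt j⟩) with hAdef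
  have hA1 : ∀ j : Fin m, b ((A j : ℕ)) ≤ (j : ℕ) := by
    intro j
    show b (Nat.findGreatest (fun i => b i ≤ (j : ℕ)) (k - 1)) ≤ (j : ℕ)
    exact Nat.findGreatest_spec (P := fun i => b i ≤ (j : ℕ)) (Nat.zero_le _)
      (by show b 0 ≤ (j : ℕ); rw [hb0]; omega)
  have hA2 : ∀ j : Fin m, (j : ℕ) < b ((A j : ℕ) + 1) := by
    intro j
    by_cases hcase : (A j : ℕ) = k - 1
    · have h5 : (A j : ℕ) + 1 = k := by omega
      rw [h5, hbk]
      exact j.isLt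
    · have h6 := Nat.findGreatest_is_greatest
        (show Nat.findGreatest (fun i => b i ≤ (j : ℕ)) (k - 1) < (A j : ℕ) + 1 by
          simp only [hAdef]; omega)
        (show (A j : ℕ) + 1 ≤ k - 1 by
          have := hAheadlt j
          simp only [hAdef] at hcase ⊢
          omega)
      simpa using h6
  have hfib : ∀ i : Fin k,
      univ.filter (fun j => A j = i) = seg (b i) (b ((i : ℕ) + 1)) := by
    intro i
    ext j
    simp only [seg, mem_filter, mem_univ, true_and]
    constructor
    · rintro rfl
      exact ⟨hA1 j, hA2 j⟩
    · rintro ⟨h5, h6⟩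
      have ha1 := hA1 j
      have ha2 := hA2 j
      refine Fin.ext ?_
      by_contra hne
      rcases lt_or_gt_of_ne hne with hlt | hgt
      · have := hbmono (show (A j : ℕ) + 1 ≤ (i : ℕ) by omega)
        omega
      · have := hbmono (show (i : ℕ) + 1 ≤ (A j : ℕ) by omega)
        omega
  calc wKMeans v w k ≤ obj v w k A ζ := wKMeans_le_obj hw A ζ
    _ = ∑ i : Fin k, setCostZ v w (seg (b i) (b ((i : ℕ) + 1))) (ζ i) := by
        rw [obj, ← Finset.sum_fiberwise univ A (fun j => w j * (v j - ζ (A j)) ^ 2)]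
        refine Finset.sum_congr rfl fun i _ => ?_
        rw [← hfib i]
        refine Finset.sum_congr rfl fun j hj => ?_
        simp only [mem_filter] at hj
        rw [hj.2]
    _ ≤ ∑ i : Fin k, (segCost v w (b i) (b ((i : ℕ) + 1)) + ε / k) :=
        Finset.sum_le_sum fun i _ => (hζ i).le
    _ = pcost v w k b + ε := by
        rw [Finset.sum_add_distrib, Finset.sum_const, card_univ, Fintype.card_fin, pcost,
          ← Fin.sum_univ_eq_sum_range (fun t => segCost v w (b t) (b (t + 1))) k,
          nsmul_eq_mul]
        congr 1
        field_simp

lemma fKM_le_wKMeans (hw : ∀ j, 0 < w j) (hv : Monotone v) {k : ℕ} (hk : 1 ≤ k) :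
    fKM v w k ≤ wKMeans v w k := by
  haveI : Nonempty (Fin k) := ⟨⟨0, hk⟩⟩
  rw [wKMeans_eq]
  refine le_ciInf fun A => le_ciInf fun z => ?_
  classical
  set z' : Fin k → ℝ := z ∘ Tuple.sort z with hz'def
  have hz'mono : Monotone z' := Tuple.monotone_sort z
  have hMne : ∀ j : Fin m,
      (univ.filter (fun i : Fin k => ∀ i', (v j - z' i) ^ 2 ≤ (v j - z' i') ^ 2)).Nonempty := by
    intro j
    obtain ⟨i0, _, hi0⟩ := Finset.exists_min_image univ (fun i => (v j - z' i) ^ 2)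
      univ_nonempty
    exact ⟨i0, mem_filter.mpr ⟨mem_univ _, fun i' => hi0 i' (mem_univ _)⟩⟩
  set A' : Fin m → Fin k := fun j => Finset.min' _ (hMne j) with hA'def
  have hA'min : ∀ j i', (v j - z' (A' j)) ^ 2 ≤ (v j - z' i') ^ 2 := by
    intro j i'
    have := Finset.min'_mem _ (hMne j)
    rw [mem_filter] at this
    exact this.2 i'
  have hA'least : ∀ j (i : Fin k), (∀ i', (v j - z' i) ^ 2 ≤ (v j - z' i') ^ 2) → A' j ≤ i := by
    intro j i hi
    exact Finset.min'_le _ _ (mem_filter.mpr ⟨mem_univ _, hi⟩)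
  have hA'mono : Monotone A' := by
    intro j1 j2 hj
    by_contra hcon
    push_neg at hcon
    have hvz : z' (A' j2) ≤ z' (A' j1) := hz'mono hcon.le
    have hnotmin : ¬ (∀ i', (v j1 - z' (A' j2)) ^ 2 ≤ (v j1 - z' i') ^ 2) := by
      intro hmin
      exact absurd (hA'least j1 _ hmin) (not_le.mpr hcon)
    push_neg at hnotmin
    obtain ⟨i', hi'⟩ := hnotmin
    have h1 : (v j1 - z' (A' j1)) ^ 2 < (v j1 - z' (A' j2)) ^ 2 :=
      lt_of_le_of_lt (hA'min j1 i') hi'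
    have h2 : (v j2 - z' (A' j2)) ^ 2 ≤ (v j2 - z' (A' j1)) ^ 2 := hA'min j2 (A' j1)
    have hvv : v j1 ≤ v j2 := hv hj
    nlinarith
  -- boundaries from the monotone assignment
  set bb : ℕ → ℕ := fun i => (univ.filter (fun j : Fin m => (A' j : ℕ) < i)).card with hbbdef
  have hbbmono : Monotone bb := by
    intro x y hxy
    refine Finset.card_le_card (Finset.monotone_filter_right _ ?_)
    intro j hj
    omega
  have hbb0 : bb 0 = 0 := by simp [hbbdef]
  have hbbk : bb k = m := by
    have : (univ.filter (fun j : Fin m => (A' j : ℕ) < k)) = univ := by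
      refine Finset.filter_true_of_mem fun j _ => (A' j).isLt
    simp [hbbdef, this]
  have hkey : ∀ (j : Fin m) (i : ℕ), ((j : ℕ) < bb i ↔ (A' j : ℕ) < i) := by
    intro j i
    constructor
    · intro hji
      by_contra hcon
      push_neg at hcon
      have hsub : (univ.filter (fun j' : Fin m => (A' j' : ℕ) < i)) ⊆ Finset.Iio j := by
        intro j' hj'
        simp only [mem_filter, mem_univ, true_and] at hj'
        rw [Finset.mem_Iio]
        by_contra hge
        push_neg at hge
        have := hA'mono hge
        omega
      have hcard := Finset.card_le_card hsub
      rw [Fin.card_Iio] at hcard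
      have hbbi : bb i = (univ.filter (fun j' : Fin m => (A' j' : ℕ) < i)).card := rfl
      omega
    · intro hAi
      have hsub : Finset.Iic j ⊆ (univ.filter (fun j' : Fin m => (A' j' : ℕ) < i)) := by
        intro j' hj'
        rw [Finset.mem_Iic] at hj'
        simp only [mem_filter, mem_univ, true_and]
        have := hA'mono hj'
        omega
      have hcard := Finset.card_le_card hsub
      rw [Fin.card_Iic] at hcard
      have hbbi : bb i = (univ.filter (fun j' : Fin m => (A' j' : ℕ) < i)).card := rfl
      omega
  have hfib : ∀ i : Fin k,
      seg (bb i) (bb ((i : ℕ) + 1)) = univ.filter (fun j => A' j = i) := by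
    intro i
    ext j
    simp only [seg, mem_filter, mem_univ, true_and]
    have h1 := hkey j i
    have h2 := hkey j ((i : ℕ) + 1)
    constructor
    · rintro ⟨h5, h6⟩
      have := h2.mp h6
      have := h1.mp
      refine Fin.ext ?_
      omega
    · rintro rfl
      constructor
      · by_contra hcon
        push_neg at hcon
        have := h1.mp (by omega)
        omega
      · exact h2.mpr (by omega)
  have hBB : fKM v w k ≤ pcost v w k bb := fKM_le hw ⟨bb, hbbmono, hbb0, hbbk⟩
  refine hBB.trans ?_
  calc pcost v w k bb
      = ∑ i : Fin k, segCost v w (bb i) (bb ((i : ℕ) + 1)) :=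
        (Fin.sum_univ_eq_sum_range (fun t => segCost v w (bb t) (bb (t + 1))) k).symm
    _ ≤ ∑ i : Fin k, setCostZ v w (seg (bb i) (bb ((i : ℕ) + 1))) (z' i) :=
        Finset.sum_le_sum fun i _ => segCost_le hw _ _ _
    _ = ∑ j, w j * (v j - z' (A' j)) ^ 2 := by
        rw [← Finset.sum_fiberwise univ A' (fun j => w j * (v j - z' (A' j)) ^ 2)]
        refine Finset.sum_congr rfl fun i _ => ?_
        rw [setCostZ, hfib i]
        refine Finset.sum_congr rfl fun j hj => ?_
        simp only [mem_filter] at hj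
        rw [hj.2]
    _ ≤ obj v w k A z := by
        refine Finset.sum_le_sum fun j _ => ?_
        refine mul_le_mul_of_nonneg_left ?_ (hw j).le
        have := hA'min j ((Tuple.sort z).symm (A j))
        simpa only [hz'def, Function.comp_apply, Equiv.apply_symm_apply] using this

lemma wKMeans_perm_le (hw : ∀ j, 0 < w j) {k : ℕ} (hk : 1 ≤ k) (σ : Equiv.Perm (Fin m)) :
    wKMeans (v ∘ σ) (w ∘ σ) k ≤ wKMeans v w k := by
  haveI : Nonempty (Fin k) := ⟨⟨0, hk⟩⟩
  rw [wKMeans_eq (v := v) (w := w)]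
  refine le_ciInf fun A => le_ciInf fun z => ?_
  have hw' : ∀ j, 0 < (w ∘ σ) j := fun j => hw _
  calc wKMeans (v ∘ σ) (w ∘ σ) k ≤ obj (v ∘ σ) (w ∘ σ) k (A ∘ σ) z :=
        wKMeans_le_obj hw' (A ∘ σ) z
    _ = obj v w k A z :=
        Equiv.sum_comp σ (fun j => w j * (v j - z (A j)) ^ 2)

lemma wKMeans_perm (hw : ∀ j, 0 < w j) {k : ℕ} (hk : 1 ≤ k) (σ : Equiv.Perm (Fin m)) :
    wKMeans (v ∘ σ) (w ∘ σ) k = wKMeans v w k := by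
  refine le_antisymm (wKMeans_perm_le hw hk σ) ?_
  have hw' : ∀ j, 0 < (w ∘ σ) j := fun j => hw _
  have h2 := wKMeans_perm_le (v := v ∘ σ) (w := w ∘ σ) hw' hk σ.symm
  have hv2 : (v ∘ σ) ∘ σ.symm = v := by ext j; simp
  have hw2 : (w ∘ σ) ∘ σ.symm = w := by ext j; simp
  rwa [hv2, hw2] at h2

lemma wKMeans_convex (hw : ∀ j, 0 < w j) {k : ℕ} (hk : 1 ≤ k) :
    wKMeans v w (k + 1) + wKMeans v w (k + 1) ≤ wKMeans v w k + wKMeans v w (k + 2) := by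
  set σ := Tuple.sort v with hσ
  have hvmono : Monotone (v ∘ σ) := Tuple.monotone_sort v
  have hw' : ∀ j, 0 < (w ∘ σ) j := fun j => hw _
  have heq : ∀ k', 1 ≤ k' → wKMeans v w k' = fKM (v ∘ σ) (w ∘ σ) k' := by
    intro k' hk'
    rw [← wKMeans_perm hw hk' σ]
    exact le_antisymm (wKMeans_le_fKM hw' hk') (fKM_le_wKMeans hw' hvmono hk')
  rw [heq k hk, heq (k + 1) (by omega), heq (k + 2) (by omega)]
  exact fKM_convex hw' hvmono hk

end KMAux

/-- **Early-stopping correctness.** If for some `C ≥ 1` the loss improvement from one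
more cluster satisfies `W(C) − W(C+1) ≤ λ`, then for every `C' ≥ C` we have
`W(C) + λ·C ≤ W(C') + λ·C'`. -/
theorem weighted_kmeans_early_stopping
    {m : ℕ} (hm : 1 ≤ m) (v w : Fin m → ℝ) (hw : ∀ j, 0 < w j)
    (lam : ℝ) (hlam : 0 ≤ lam) (C : ℕ) (hC : 1 ≤ C)
    (h : wKMeans v w C - wKMeans v w (C + 1) ≤ lam) :
    ∀ C' : ℕ, C ≤ C' →
      wKMeans v w C + lam * (C : ℝ) ≤ wKMeans v w C' + lam * (C' : ℝ) := by

  have hgap : ∀ k, C ≤ k → wKMeans v w k - wKMeans v w (k + 1) ≤ lam := by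
    refine Nat.le_induction h ?_
    intro n hn ih
    have hconv := KMAux.wKMeans_convex (v := v) hw (le_trans hC hn)
    linarith
  refine Nat.le_induction le_rfl ?_
  intro n hn ih
  have hg := hgap n hn
  have hcast : lam * ((n + 1 : ℕ) : ℝ) = lam * (n : ℝ) + lam := by push_cast; ring
  rw [hcast]
  linarith
end

section
/- Let λ ≥ 0 and R^c ∈ ℝ with R^c ≥ 0. Let S be a subset of Fin N with both S and its complement nonempty, let P_L be a partition of S, let P_R be a partition of the complement of S, and let P = P_L ∪ P_R (a partition of Fin N). For a partition Q of a subset, write R_sub(Q) = (1/N)·∑_{B∈Q} SSE(B) + λ·|Q|. Then R(P) = R_sub(P_L) + R_sub(P_R); consequently, if R_sub(P_L) > R^c, or R_sub(P_R) > R^c, or R_sub(P_L) + R_sub(P_R) > R^c, then R(P) > R^c. (Hierarchical Objective Lower Bound for Sub-trees: a tree whose root split produces a left subtree and a right subtree has objective equal to the sum of the two sub-objectives, so it can be pruned whenever either sub-objective, or their sum, exceeds the current best objective R^c.) -/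
open Finset

/-- Regularized objective of a partition of a subset (a sub-tree). -/
noncomputable def Rsub {N : ℕ} (y : Fin N → ℝ) (lam : ℝ) (Q : Finset (Finset (Fin N))) : ℝ :=
  (1 / (N : ℝ)) * ∑ B ∈ Q, sse y B + lam * (Q.card : ℝ)

/-- **Hierarchical Objective Lower Bound for Sub-trees.** If `P_L` partitions `S` and
`P_R` partitions `Sᶜ` (both nonempty), then `R(P_L ∪ P_R) = R_sub(P_L) + R_sub(P_R)`;
consequently if either sub-objective or their sum exceeds `R^c`, then so does the
objective of the whole tree. -/
theorem hierarchical_lower_bound_subtrees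
    {N : ℕ} (hN : 1 ≤ N) (y : Fin N → ℝ) (lam : ℝ) (hlam : 0 ≤ lam)
    (Rc : ℝ) (hRc : 0 ≤ Rc)
    (S : Finset (Fin N)) (hS : S.Nonempty) (hSc : Sᶜ.Nonempty)
    (PL PR : Finset (Finset (Fin N)))
    (hPL : IsPartitionOn S PL) (hPR : IsPartitionOn Sᶜ PR) :
    Robj y lam (PL ∪ PR) = Rsub y lam PL + Rsub y lam PR ∧
    ((Rsub y lam PL > Rc ∨ Rsub y lam PR > Rc ∨ Rsub y lam PL + Rsub y lam PR > Rc) →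
      Robj y lam (PL ∪ PR) > Rc) := by
  obtain ⟨hLne, -, hLU⟩ := hPL
  obtain ⟨hRne, -, hRU⟩ := hPR
  have hdisj : Disjoint PL PR := by
    rw [Finset.disjoint_left]
    intro B hBL hBR
    have hBS : B ⊆ S := hLU ▸ Finset.subset_biUnion_of_mem id hBL
    have hBSc : B ⊆ Sᶜ := hRU ▸ Finset.subset_biUnion_of_mem id hBR
    obtain ⟨x, hx⟩ := hLne B hBL
    exact (Finset.mem_compl.mp (hBSc hx)) (hBS hx)
  have heq : Robj y lam (PL ∪ PR) = Rsub y lam PL + Rsub y lam PR := by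
    unfold Robj Rsub
    rw [Finset.sum_union hdisj, Finset.card_union_of_disjoint hdisj]
    push_cast
    ring
  refine ⟨heq, ?_⟩
  have hsse : ∀ Q : Finset (Finset (Fin N)), 0 ≤ Rsub y lam Q := by
    intro Q
    unfold Rsub
    have : (0:ℝ) ≤ ∑ B ∈ Q, sse y B :=
      Finset.sum_nonneg fun B _ => Finset.sum_nonneg fun i _ => sq_nonneg _
    positivity
  intro h
  rw [heq]
  rcases h with h | h | h
  · linarith [hsse PR]
  · linarith [hsse PL]
  · exact h
end

section
/- Let λ > 0 and R^c ≥ 0. Let P be a feature-consistent partition of Fin N (with binary features x : Fin N → (Fin M → Bool)) satisfying R(P) ≤ R^c. Then |P| ≤ min(⌊R^c/λ⌋, 2^M). (Upper Bound on the Number of Leaves: any tree whose objective does not exceed the current best objective R^c has at most ⌊R^c/λ⌋ leaves, and a tree over M binary features can have at most 2^M leaves.) -/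
open Finset

/-- **Upper Bound on the Number of Leaves.** For `λ > 0`, `R^c ≥ 0`, and a
feature-consistent partition `P` with `R(P) ≤ R^c`, the number of leaves satisfies
`|P| ≤ min(⌊R^c/λ⌋, 2^M)`. -/
theorem upper_bound_number_of_leaves
    {N M : ℕ} (hN : 1 ≤ N) (x : Fin N → Fin M → Bool) (y : Fin N → ℝ)
    (lam : ℝ) (hlam : 0 < lam) (Rc : ℝ) (hRc : 0 ≤ Rc)
    (P : Finset (Finset (Fin N))) (hP : IsPartitionOn Finset.univ P)
    (hPx : FeatureConsistent x P)
    (hobj : Robj y lam P ≤ Rc) :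
    P.card ≤ min (Nat.floor (Rc / lam)) (2 ^ M) := by
  refine le_min ?_ ?_
  · -- lam * card ≤ Robj ≤ Rc
    have hsse : 0 ≤ (1 / (N : ℝ)) * ∑ B ∈ P, sse y B := by
      apply mul_nonneg (by positivity)
      exact Finset.sum_nonneg fun B _ => Finset.sum_nonneg fun i _ => sq_nonneg _
    have h1 : lam * (P.card : ℝ) ≤ Rc := by
      have := hobj
      unfold Robj at this
      linarith
    rw [Nat.le_floor_iff (by positivity)]
    rw [le_div_iff₀ hlam]
    linarith [h1, mul_comm lam (P.card : ℝ)]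
  · -- injection into feature vectors
    classical
    have : P.card ≤ Fintype.card (Fin M → Bool) := by
      rw [← Finset.card_univ]
      apply Finset.card_le_card_of_injOn
        (fun B => if h : B.Nonempty then x h.choose else fun _ => false)
        (fun B _ => Finset.mem_univ _)
      intro B hB B' hB' heq
      have hBne := hP.1 B hB
      have hB'ne := hP.1 B' hB'
      simp only [dif_pos hBne, dif_pos hB'ne] at heq
      by_contra hne
      have hdisj := hP.2.1 B hB B' hB' hne
      have hj : hB'ne.choose ∈ B := hPx _ _ heq B hB hBne.choose_spec
      exact (Finset.disjoint_left.mp hdisj hj) hB'ne.choose_spec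
    simpa using this
end

section
/- Let λ > 0 and R^c ∈ ℝ. Let P be a partition of Fin N with R(P) ≤ R^c, let F be a subset of the set of blocks of P, and let H be a natural number with H ≤ |P|. Then |P| ≤ H + ⌊(R^c − (1/N)·∑_{B∈F} SSE(B) − λ·H)/λ⌋. (Parent-specific upper bound on the number of leaves: every child of a parent tree with H leaves and fixed-leaf loss (1/N)·∑_{B∈F} SSE(B) whose objective does not exceed R^c has at most this many leaves.) -/
open Finset

/-- **Parent-specific upper bound on the number of leaves.** For `λ > 0`, a partition
`P` with `R(P) ≤ R^c`, a subset `F` of its blocks and `H ≤ |P|`: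
`|P| ≤ H + ⌊(R^c − (1/N)·∑_{B∈F} SSE(B) − λ·H)/λ⌋`. -/
theorem parent_specific_upper_bound_leaves
    {N : ℕ} (hN : 1 ≤ N) (y : Fin N → ℝ) (lam : ℝ) (hlam : 0 < lam) (Rc : ℝ)
    (P : Finset (Finset (Fin N))) (hP : IsPartitionOn Finset.univ P)
    (hobj : Robj y lam P ≤ Rc)
    (F : Finset (Finset (Fin N))) (hF : F ⊆ P)
    (H : ℕ) (hH : H ≤ P.card) :
    P.card ≤ H + Nat.floor ((Rc - (1 / (N : ℝ)) * ∑ B ∈ F, sse y B - lam * (H : ℝ)) / lam) := by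
  have hsse : ∀ B, 0 ≤ sse y B := fun B => Finset.sum_nonneg fun i _ => sq_nonneg _
  have hsum : (∑ B ∈ F, sse y B) ≤ ∑ B ∈ P, sse y B :=
    Finset.sum_le_sum_of_subset_of_nonneg hF fun B _ _ => hsse B
  have hNpos : (0:ℝ) < (N:ℝ) := by exact_mod_cast hN
  have h1 : (0:ℝ) ≤ 1 / (N:ℝ) := by positivity
  have key : lam * (P.card : ℝ) ≤ Rc - (1 / (N : ℝ)) * ∑ B ∈ F, sse y B := by
    have := mul_le_mul_of_nonneg_left hsum h1
    unfold Robj at hobj; linarith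
  have hle : ((P.card - H : ℕ) : ℝ) ≤
      (Rc - (1 / (N : ℝ)) * ∑ B ∈ F, sse y B - lam * (H : ℝ)) / lam := by
    rw [le_div_iff₀ hlam, Nat.cast_sub hH]
    ring_nf at key ⊢
    linarith
  have := Nat.le_floor hle
  omega
end
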